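/- arXiv:2506.11529 — 4 statements merged into one kernel-verified Lean document; each statement's English description precedes it below -/
import Mathlib

section
/- Let r ≥ 1, 1 ≤ p ≤ ∞, and suppose the sequence ξ_k = ⟨f − f^δ, φ_k⟩ satisfies ‖ξ‖_{ℓ_p} ≤ δ for some 0 < δ < 1. Then there is a constant c (independent of δ and N) such that for all N ≥ r, ‖D_N^{(r)} f − D_N^{(r)} f^δ‖_C ≤ c · δ · N^{2r − 1/p + 3/2}, where ‖·‖_C denotes the sup norm on [-1,1]. -/
open MeasureTheory Set ENNReal

/-- Orthonormal Legendre polynomial `φ_k(t) = √(k+1/2)·(2^k k!)⁻¹·dᵏ/dtᵏ[(t²-1)^k]`. -/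
noncomputable def phi (k : ℕ) : ℝ → ℝ := fun t =>
  Real.sqrt ((k : ℝ) + 1/2) * ((2:ℝ)^k * (Nat.factorial k : ℝ))⁻¹ *
    iteratedDeriv k (fun s => (s^2 - 1)^k) t

/-- Fourier–Legendre coefficient `⟨f, φ_k⟩`. -/
noncomputable def coef (f : ℝ → ℝ) (k : ℕ) : ℝ := ∫ t in (-1:ℝ)..1, f t * phi k t

/-- Summand of the weighted Wiener norm. -/
noncomputable def wSeq (s μ : ℝ) (f : ℝ → ℝ) (k : ℕ) : ℝ :=
  (max 1 (k:ℝ)) ^ (s * μ) * |coef f k| ^ s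

/-- Weighted Wiener norm `‖f‖_{s,μ}`. -/
noncomputable def wNorm (s μ : ℝ) (f : ℝ → ℝ) : ℝ := (∑' k, wSeq s μ f k) ^ (1/s)

/-- Truncation method `D_N^{(r)}` applied to a coefficient sequence `a`. -/
noncomputable def DN (a : ℕ → ℝ) (r N : ℕ) (t : ℝ) : ℝ :=
  ∑ k ∈ Finset.Icc r N, a k * iteratedDeriv r (phi k) t

/-- Lebesgue measure restricted to `[-1,1]`. -/
noncomputable def restr : Measure ℝ := volume.restrict (Set.Icc (-1) 1)

section Aux
open ContDiff

noncomputable def G (k : ℕ) : ℝ → ℝ := fun t => (t^2 - 1)^k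

lemma contDiff_G (k : ℕ) : ContDiff ℝ ∞ (G k) := by
  unfold G
  exact ((contDiff_id.pow 2).sub contDiff_const).pow k

lemma diffble_iter (k m : ℕ) : Differentiable ℝ (iteratedDeriv m (G k)) :=
  (contDiff_G k).differentiable_iteratedDeriv m (by exact_mod_cast lt_top_iff_ne_top.2 (by simp))

lemma deriv_G (k : ℕ) : deriv (G (k+1)) = fun t => 2*(k+1)*t * G k t := by
  funext t
  have h1 : HasDerivAt (fun s : ℝ => s^2 - 1) (2*t) t := by
    simpa using ((hasDerivAt_pow 2 t).sub_const 1)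
  have h2 := h1.pow (k+1)
  have := h2.deriv
  unfold G
  rw [show (fun t : ℝ => (t^2 - 1)^(k+1)) = (fun s : ℝ => s^2 - 1)^(k+1) from funext fun s => rfl, this]
  push_cast
  ring_nf


lemma diffble_of_top (f : ℝ → ℝ) (hf : ContDiff ℝ ∞ f) (m : ℕ) :
    Differentiable ℝ (iteratedDeriv m f) :=
  hf.differentiable_iteratedDeriv m (by exact_mod_cast lt_top_iff_ne_top.2 (by simp))

lemma contDiff_top_iter (f : ℝ → ℝ) (hf : ContDiff ℝ ∞ f) (m : ℕ) :
    ContDiff ℝ ∞ (iteratedDeriv m f) := by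
  have h : iteratedDeriv m f = deriv^[m] f := iteratedDeriv_eq_iterate
  rw [h]
  exact hf.iterate_deriv m

lemma iter_deriv_id_mul (f : ℝ → ℝ) (hf : ContDiff ℝ ∞ f) (m : ℕ) :
    iteratedDeriv m (fun s => s * f s) =
      fun t => t * iteratedDeriv m f t + (m:ℝ) * iteratedDeriv (m-1) f t := by
  induction m with
  | zero => funext t; simp
  | succ m ih =>
    funext t
    rw [iteratedDeriv_succ, ih]
    have hdm : DifferentiableAt ℝ (iteratedDeriv m f) t := diffble_of_top f hf m t
    have hdm1 : DifferentiableAt ℝ (iteratedDeriv (m-1) f) t := diffble_of_top f hf (m-1) t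
    rw [deriv_fun_add ((differentiableAt_fun_id.fun_mul hdm)) (hdm1.const_mul _),
      deriv_fun_mul differentiableAt_fun_id hdm, deriv_const_mul _ hdm1]
    rw [← iteratedDeriv_succ]
    cases m with
    | zero => simp [deriv_id'']; ring
    | succ j =>
      have : (j+1) - 1 = j := rfl
      rw [this, ← iteratedDeriv_succ]
      simp [deriv_id'']
      push_cast
      ring


lemma cdOn (f : ℝ → ℝ) (hf : ContDiff ℝ ∞ f) (m : ℕ) : ContDiffOn ℝ m f Set.univ :=
  (hf.of_le (by exact_mod_cast le_top)).contDiffOn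

lemma iter_sub (f g : ℝ → ℝ) (hf : ContDiff ℝ ∞ f) (hg : ContDiff ℝ ∞ g) (m : ℕ) (t : ℝ) :
    iteratedDeriv m (fun s => f s - g s) t = iteratedDeriv m f t - iteratedDeriv m g t := by
  simp only [← iteratedDerivWithin_univ]
  exact iteratedDerivWithin_sub (Set.mem_univ t) uniqueDiffOn_univ ((cdOn f hf m) t (Set.mem_univ t)) ((cdOn g hg m) t (Set.mem_univ t))

lemma iter_cmul (c : ℝ) (f : ℝ → ℝ) (hf : ContDiff ℝ ∞ f) (m : ℕ) (t : ℝ) :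
    iteratedDeriv m (fun s => c * f s) t = c * iteratedDeriv m f t := by
  simp only [← iteratedDerivWithin_univ]
  exact iteratedDerivWithin_const_mul (Set.mem_univ t) uniqueDiffOn_univ c ((cdOn f hf m) t (Set.mem_univ t))

lemma ode_aux (K : ℕ) (hK : 1 ≤ K) (n : ℕ) (t : ℝ) :
    (t^2-1) * iteratedDeriv (n+2) (G K) t + 2*((n:ℝ)+1)*t * iteratedDeriv (n+1) (G K) t
      + ((n:ℝ)+1)*(n:ℝ) * iteratedDeriv n (G K) t
    = 2*(K:ℝ)*(t * iteratedDeriv (n+1) (G K) t + ((n:ℝ)+1) * iteratedDeriv n (G K) t) := by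
  have hG : ContDiff ℝ ∞ (G K) := contDiff_G K
  have hA : ContDiff ℝ ∞ (deriv (G K)) := by
    have h := contDiff_top_iter (G K) hG 1
    rwa [iteratedDeriv_succ, iteratedDeriv_zero] at h
  set A := deriv (G K) with hAdef
  have hsA : ContDiff ℝ ∞ (fun s => s * A s) := contDiff_id.mul hA
  have hY : ∀ (j : ℕ) (x : ℝ), iteratedDeriv j A x = iteratedDeriv (j+1) (G K) x := by
    intro j x; rw [hAdef, ← iteratedDeriv_succ']
  -- expansion of iteratedDeriv j (fun s => s * A s)
  have EsA : ∀ (j : ℕ) (x : ℝ), iteratedDeriv j (fun s => s * A s) x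
      = x * iteratedDeriv (j+1) (G K) x + (j:ℝ) * iteratedDeriv j (G K) x := by
    intro j x
    rw [iter_deriv_id_mul A hA j]
    dsimp only
    rw [hY j x]
    cases j with
    | zero => simp
    | succ i =>
      have h2 : (i+1) - 1 = i := rfl
      rw [h2, hY i x]
  -- the function identity
  obtain ⟨k, rfl⟩ : ∃ k, K = k + 1 := ⟨K - 1, by omega⟩
  have hfun : (fun s => s * (s * A s) - A s) = (fun s => (2*((k:ℝ)+1)) * (s * G (k+1) s)) := by
    funext s
    have h1 : A s = 2*((k:ℝ)+1)*s * G k s := by rw [hAdef, deriv_G]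
    have h2 : G (k+1) s = (s^2-1) * G k s := by unfold G; ring
    rw [h1, h2]; ring
  have key : iteratedDeriv (n+1) (fun s => s * (s * A s) - A s) t
      = iteratedDeriv (n+1) (fun s => (2*((k:ℝ)+1)) * (s * G (k+1) s)) t := by rw [hfun]
  rw [iter_sub (fun s => s * (s * A s)) A (by exact contDiff_id.mul hsA) hA (n+1) t] at key
  rw [iter_cmul (2*((k:ℝ)+1)) (fun s => s * G (k+1) s) (by exact contDiff_id.mul hG) (n+1) t] at key
  rw [iter_deriv_id_mul (fun s => s * A s) hsA (n+1)] at key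
  rw [iter_deriv_id_mul (G (k+1)) hG (n+1)] at key
  simp only [Nat.add_sub_cancel] at key
  rw [EsA (n+1) t, EsA n t, hY (n+1) t] at key
  have hcast : ((k:ℝ)+1) = ((k+1 : ℕ) : ℝ) := by push_cast; ring
  push_cast at key ⊢
  nlinarith [key]

lemma endpoint_rec (K : ℕ) (hK : 1 ≤ K) (n : ℕ) :
    2*((n:ℝ)+1-(K:ℝ)) * iteratedDeriv (n+1) (G K) 1
      = ((n:ℝ)+1)*(2*(K:ℝ)-(n:ℝ)) * iteratedDeriv n (G K) 1 := by
  have h := ode_aux K hK n 1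
  norm_num at h
  nlinarith [h]

lemma vanish (K : ℕ) (hK : 1 ≤ K) (m : ℕ) (hm : m < K) : iteratedDeriv m (G K) 1 = 0 := by
  induction m with
  | zero =>
    rw [iteratedDeriv_zero]
    unfold G
    have h0 : ((1:ℝ)^2 - 1) = 0 := by norm_num
    rw [h0, zero_pow (by omega : K ≠ 0)]
  | succ m ih =>
    have h := endpoint_rec K hK m
    rw [ih (by omega), mul_zero] at h
    have hne : 2*((m:ℝ)+1-(K:ℝ)) ≠ 0 := by
      have : (m:ℝ)+1 < (K:ℝ) := by exact_mod_cast (by omega : m+1 < K)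
      intro hc; nlinarith
    exact (mul_eq_zero.mp h).resolve_left hne

lemma base_val (k : ℕ) : iteratedDeriv k (G k) 1 = 2^k * (Nat.factorial k : ℝ) := by
  induction k with
  | zero => unfold G; norm_num
  | succ k ih =>
    rw [iteratedDeriv_succ']
    rw [show deriv (G (k+1)) = fun t => 2*((k:ℝ)+1)*t * G k t from deriv_G k]
    have hG : ContDiff ℝ ∞ (G k) := contDiff_G k
    have h1 : (fun t => 2*((k:ℝ)+1)*t * G k t) = (fun t => (2*((k:ℝ)+1)) * (t * G k t)) := by
      funext t; ring
    rw [h1, iter_cmul (2*((k:ℝ)+1)) (fun t => t * G k t) (by exact contDiff_id.mul hG) k 1,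
      iter_deriv_id_mul (G k) hG k]
    dsimp only
    rw [ih]
    cases k with
    | zero => norm_num
    | succ j =>
      rw [show (j+1) - 1 = j from rfl, vanish (j+1) (by omega) j (by omega)]
      simp only [Nat.factorial_succ]
      push_cast
      ring

lemma up_bound (k r : ℕ) (hk : 1 ≤ k) (hrk : r ≤ k) :
    |iteratedDeriv (k+r) (G k) 1| ≤ 2^k * (Nat.factorial k : ℝ) * (k:ℝ)^(2*r) := by
  induction r with
  | zero =>
    simp only [Nat.add_zero, Nat.mul_zero, pow_zero, mul_one]
    rw [base_val, abs_of_nonneg (by positivity)]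
  | succ j ih =>
    have hj : j ≤ k := by omega
    have ihv := ih hj
    have h := endpoint_rec k hk (k+j)
    have hval : iteratedDeriv (k+j+1) (G k) 1
        = ((k:ℝ)+(j:ℝ)+1)*((k:ℝ)-(j:ℝ)) / (2*((j:ℝ)+1)) * iteratedDeriv (k+j) (G k) 1 := by
      push_cast at h
      have h2 : 2*((j:ℝ)+1) * iteratedDeriv (k+j+1) (G k) 1
          = ((k:ℝ)+(j:ℝ)+1)*((k:ℝ)-(j:ℝ)) * iteratedDeriv (k+j) (G k) 1 := by
        linear_combination h
      field_simp
      linear_combination h2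
    rw [show k + (j+1) = (k+j)+1 by omega, hval]
    rw [abs_mul]
    have hfac : |((k:ℝ)+(j:ℝ)+1)*((k:ℝ)-(j:ℝ)) / (2*((j:ℝ)+1))| ≤ (k:ℝ)^2 := by
      have h1 : (0:ℝ) ≤ (k:ℝ)-(j:ℝ) := by
        have : (j:ℝ) ≤ (k:ℝ) := by exact_mod_cast hj
        linarith
      have h2 : ((k:ℝ)+(j:ℝ)+1) ≤ 2*(k:ℝ) := by
        have : ((j:ℝ)+1) ≤ (k:ℝ) := by exact_mod_cast (by omega : j+1 ≤ k)
        linarith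
      have hj0 : (0:ℝ) ≤ (j:ℝ) := by positivity
      have h3 : ((k:ℝ)-(j:ℝ)) ≤ (k:ℝ) := by linarith
      rw [abs_of_nonneg (by positivity)]
      rw [div_le_iff₀ (by positivity)]
      have hk0 : (0:ℝ) ≤ (k:ℝ) := by positivity
      have h4 : ((j:ℝ)+1) ≥ 1 := by linarith
      nlinarith
    calc |((k:ℝ)+(j:ℝ)+1)*((k:ℝ)-(j:ℝ)) / (2*((j:ℝ)+1))| * |iteratedDeriv (k+j) (G k) 1|
        ≤ (k:ℝ)^2 * (2^k * (Nat.factorial k : ℝ) * (k:ℝ)^(2*j)) := by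
          apply mul_le_mul hfac ihv (abs_nonneg _) (by positivity)
      _ = 2^k * (Nat.factorial k : ℝ) * (k:ℝ)^(2*(j+1)) := by ring

lemma abs_at_neg_one (K m : ℕ) :
    |iteratedDeriv m (G K) (-1)| = |iteratedDeriv m (G K) 1| := by
  have h := iteratedDeriv_comp_neg m (G K) 1
  have heq : (fun x : ℝ => G K (-x)) = G K := by
    funext x; unfold G; congr 1; ring
  rw [heq] at h
  rw [h, smul_eq_mul, abs_mul, abs_pow, abs_neg, abs_one, one_pow, one_mul]

lemma iter_iter (f : ℝ → ℝ) (k r : ℕ) :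
    iteratedDeriv r (iteratedDeriv k f) = iteratedDeriv (k+r) f := by
  induction r with
  | zero => rfl
  | succ r ih =>
    rw [iteratedDeriv_succ, ih, ← iteratedDeriv_succ]
    norm_num [Nat.add_assoc]

lemma iter_poly (p : Polynomial ℝ) (m : ℕ) :
    iteratedDeriv m (fun x => p.eval x) = fun x => (Polynomial.derivative^[m] p).eval x := by
  induction m generalizing p with
  | zero => simp
  | succ m ih =>
    rw [iteratedDeriv_succ']
    have hd : deriv (fun x => p.eval x) = fun x => p.derivative.eval x := by
      funext x; exact Polynomial.deriv p
    rw [hd, ih, Function.iterate_succ_apply]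

lemma G_eq_poly (k : ℕ) : G k = fun x => (((Polynomial.X : Polynomial ℝ)^2 - 1)^k).eval x := by
  funext x; unfold G; simp

lemma Y_top_deriv_zero (k : ℕ) : iteratedDeriv (2*k+1) (G k) = 0 := by
  rw [G_eq_poly, iter_poly]
  have hdeg : (((Polynomial.X : Polynomial ℝ)^2 - 1)^k).natDegree < 2*k+1 := by
    calc (((Polynomial.X : Polynomial ℝ)^2 - 1)^k).natDegree
        ≤ k * ((Polynomial.X : Polynomial ℝ)^2 - 1).natDegree := Polynomial.natDegree_pow_le
      _ ≤ k * 2 := by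
          apply Nat.mul_le_mul_left
          calc ((Polynomial.X : Polynomial ℝ)^2 - 1).natDegree
              ≤ max ((Polynomial.X : Polynomial ℝ)^2).natDegree (1 : Polynomial ℝ).natDegree :=
                Polynomial.natDegree_sub_le _ _
            _ ≤ 2 := by simp
      _ < 2*k+1 := by omega
  rw [Polynomial.iterate_derivative_eq_zero hdeg]
  funext x; simp

lemma sq_le_endpoint (k r : ℕ) (hk : 1 ≤ k) (hrk : r ≤ k) (t : ℝ) (ht : t ∈ Set.Icc (-1:ℝ) 1) :
    (iteratedDeriv (k+r) (G k) t)^2 ≤ (iteratedDeriv (k+r) (G k) 1)^2 := by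
  rcases eq_or_lt_of_le hrk with heq | hlt
  · -- r = k : constant function
    have hconst : iteratedDeriv (k+r) (G k) t = iteratedDeriv (k+r) (G k) 1 := by
      apply is_const_of_deriv_eq_zero (diffble_of_top (G k) (contDiff_G k) (k+r))
      intro x
      have hz : deriv (iteratedDeriv (k+r) (G k)) x = iteratedDeriv (k+r+1) (G k) x := by
        rw [← iteratedDeriv_succ]
      rw [hz, show k+r+1 = 2*k+1 by omega, Y_top_deriv_zero]
      rfl
    rw [hconst]
  · -- r < k
    set m := k + r with hm
    have hdiff : ∀ j, Differentiable ℝ (iteratedDeriv j (G k)) :=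
      fun j => diffble_of_top (G k) (contDiff_G k) j
    have hder : ∀ (j : ℕ) (x : ℝ),
        HasDerivAt (iteratedDeriv j (G k)) (iteratedDeriv (j+1) (G k) x) x := by
      intro j x
      have h := (hdiff j x).hasDerivAt
      rwa [show iteratedDeriv (j+1) (G k) = deriv (iteratedDeriv j (G k)) from iteratedDeriv_succ]
    set lam : ℝ := ((k:ℝ)+(r:ℝ)+1)*((k:ℝ)-(r:ℝ)) with hlam
    have hlampos : 0 < lam := by
      have h1 : (r:ℝ) < (k:ℝ) := by exact_mod_cast hlt
      have h2 : (0:ℝ) ≤ (r:ℝ) := by positivity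
      have h3 : (0:ℝ) < (k:ℝ) := by exact_mod_cast hk
      apply _root_.mul_pos <;> nlinarith
    set V : ℝ → ℝ := fun x =>
      (1-x^2) * (iteratedDeriv (m+1) (G k) x)^2 + lam * (iteratedDeriv m (G k) x)^2 with hV
    -- the ODE
    have hode : ∀ x : ℝ, (1-x^2) * iteratedDeriv (m+2) (G k) x
        = 2*((r:ℝ)+1)*x * iteratedDeriv (m+1) (G k) x - lam * iteratedDeriv m (G k) x := by
      intro x
      have h := ode_aux k hk m x
      rw [hm] at h ⊢
      rw [hlam]
      push_cast at h ⊢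
      linear_combination -h
    have hVder : ∀ x : ℝ, HasDerivAt V ((4*(r:ℝ)+2) * x * (iteratedDeriv (m+1) (G k) x)^2) x := by
      intro x
      have h1 : HasDerivAt (fun x : ℝ => 1 - x^2) (-(2*x)) x := by
        simpa using ((hasDerivAt_pow 2 x).const_sub 1)
      have h2 : HasDerivAt (fun y => (iteratedDeriv (m+1) (G k) y)^2)
          (2 * iteratedDeriv (m+1) (G k) x * iteratedDeriv (m+2) (G k) x) x := by
        have := (hder (m+1) x).pow 2
        simpa [Pi.pow_def] using this
      have h3 : HasDerivAt (fun y => (iteratedDeriv m (G k) y)^2)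
          (2 * iteratedDeriv m (G k) x * iteratedDeriv (m+1) (G k) x) x := by
        have := (hder m x).pow 2
        simpa [Pi.pow_def] using this
      have h4 := (h1.mul h2).add ((h3.const_mul lam))
      have heq : (-(2*x)) * (iteratedDeriv (m+1) (G k) x)^2
          + (fun x : ℝ => 1 - x^2) x * (2 * iteratedDeriv (m+1) (G k) x * iteratedDeriv (m+2) (G k) x)
          + lam * (2 * iteratedDeriv m (G k) x * iteratedDeriv (m+1) (G k) x)
          = (4*(r:ℝ)+2) * x * (iteratedDeriv (m+1) (G k) x)^2 := by
        have ho := hode x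
        linear_combination (2 * iteratedDeriv (m+1) (G k) x) * ho
      rw [heq] at h4
      exact h4
    have hVcont : Continuous V := by
      apply Continuous.add
      · exact (continuous_const.sub (continuous_pow 2)).mul
          (((contDiff_top_iter (G k) (contDiff_G k) (m+1)).continuous).pow 2)
      · exact continuous_const.mul (((contDiff_top_iter (G k) (contDiff_G k) m).continuous).pow 2)
    have hVdiff : Differentiable ℝ V := fun x => ((hVder x).differentiableAt)
    -- monotone on [0,1]
    have hmono : MonotoneOn V (Set.Icc 0 1) := by
      apply monotoneOn_of_deriv_nonneg (convex_Icc 0 1) hVcont.continuousOn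
        (hVdiff.differentiableOn)
      intro x hx
      rw [interior_Icc] at hx
      rw [(hVder x).deriv]
      have : (0:ℝ) ≤ x := le_of_lt hx.1
      positivity
    have hanti : AntitoneOn V (Set.Icc (-1) 0) := by
      apply antitoneOn_of_deriv_nonpos (convex_Icc (-1) 0) hVcont.continuousOn
        (hVdiff.differentiableOn)
      intro x hx
      rw [interior_Icc] at hx
      rw [(hVder x).deriv]
      have hx0 : x ≤ 0 := le_of_lt hx.2
      have : (0:ℝ) ≤ (4*(r:ℝ)+2) * (iteratedDeriv (m+1) (G k) x)^2 := by positivity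
      nlinarith [sq_nonneg (iteratedDeriv (m+1) (G k) x)]
    have h2 : (iteratedDeriv m (G k) (-1))^2 = (iteratedDeriv m (G k) 1)^2 := by
      rw [← sq_abs, abs_at_neg_one, sq_abs]
    have hVend : V (-1) = V 1 := by
      simp only [hV]
      norm_num [h2]
    have hVbound : V t ≤ V 1 := by
      rcases le_or_gt 0 t with h0 | h0
      · exact hmono ⟨h0, ht.2⟩ ⟨zero_le_one, le_refl 1⟩ ht.2
      · have h5 := hanti ⟨le_refl (-1), by norm_num⟩ ⟨ht.1, h0.le⟩ ht.1
        rw [hVend] at h5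
        exact h5
    have hV1 : V 1 = lam * (iteratedDeriv m (G k) 1)^2 := by simp only [hV]; norm_num
    have hVt : lam * (iteratedDeriv m (G k) t)^2 ≤ V t := by
      have h1 : (0:ℝ) ≤ 1 - t^2 := by nlinarith [ht.1, ht.2]
      have h6 : (0:ℝ) ≤ (1-t^2) * (iteratedDeriv (m+1) (G k) t)^2 := by positivity
      simp only [hV]
      nlinarith [h6]
    have := hVt.trans (hVbound.trans_eq hV1)
    exact le_of_mul_le_mul_left (by linarith) hlampos


lemma phi_iter_eq (k r : ℕ) (t : ℝ) :
    iteratedDeriv r (phi k) t = (Real.sqrt ((k:ℝ) + 1/2) * ((2:ℝ)^k * (Nat.factorial k : ℝ))⁻¹)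
      * iteratedDeriv (k+r) (G k) t := by
  have h1 : phi k = fun t => (Real.sqrt ((k:ℝ) + 1/2) * ((2:ℝ)^k * (Nat.factorial k : ℝ))⁻¹)
      * iteratedDeriv k (G k) t := rfl
  rw [h1, iter_cmul _ _ (by exact contDiff_top_iter (G k) (contDiff_G k) k) r t, iter_iter]

lemma phi_bound (k r : ℕ) (hk1 : 1 ≤ k) (hrk : r ≤ k) (t : ℝ) (ht : t ∈ Set.Icc (-1:ℝ) 1) :
    |iteratedDeriv r (phi k) t| ≤ Real.sqrt 2 * (k:ℝ) ^ ((2*(r:ℝ)) + 1/2 : ℝ) := by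
  have hk0 : (0:ℝ) < (k:ℝ) := by exact_mod_cast hk1
  have hYb : |iteratedDeriv (k+r) (G k) t| ≤ 2^k * (Nat.factorial k : ℝ) * (k:ℝ)^(2*r) := by
    have h1 := sq_le_endpoint k r hk1 hrk t ht
    have h2 := up_bound k r hk1 hrk
    have h3 : |iteratedDeriv (k+r) (G k) t| ≤ |iteratedDeriv (k+r) (G k) 1| := by
      have h1' : |iteratedDeriv (k+r) (G k) t|^2 ≤ |iteratedDeriv (k+r) (G k) 1|^2 := by
        rwa [sq_abs, sq_abs]
      exact (pow_le_pow_iff_left₀ (abs_nonneg _) (abs_nonneg _) two_ne_zero).mp h1'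
    exact h3.trans h2
  rw [phi_iter_eq, abs_mul]
  have hpos : 0 < (2:ℝ)^k * (Nat.factorial k : ℝ) := by positivity
  have hc : |Real.sqrt ((k:ℝ) + 1/2) * ((2:ℝ)^k * (Nat.factorial k : ℝ))⁻¹|
      = Real.sqrt ((k:ℝ) + 1/2) * ((2:ℝ)^k * (Nat.factorial k : ℝ))⁻¹ := by
    apply abs_of_nonneg
    positivity
  rw [hc]
  calc Real.sqrt ((k:ℝ) + 1/2) * ((2:ℝ)^k * (Nat.factorial k : ℝ))⁻¹ * |iteratedDeriv (k+r) (G k) t|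
      ≤ Real.sqrt ((k:ℝ) + 1/2) * ((2:ℝ)^k * (Nat.factorial k : ℝ))⁻¹
        * (2^k * (Nat.factorial k : ℝ) * (k:ℝ)^(2*r)) := by
        apply mul_le_mul_of_nonneg_left hYb (by positivity)
    _ = Real.sqrt ((k:ℝ) + 1/2) * (k:ℝ)^(2*r) := by
        field_simp
    _ ≤ Real.sqrt 2 * (k:ℝ) ^ ((2*(r:ℝ)) + 1/2 : ℝ) := by
        have h1 : Real.sqrt ((k:ℝ) + 1/2) ≤ Real.sqrt 2 * Real.sqrt (k:ℝ) := by
          rw [← Real.sqrt_mul (by norm_num)]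
          apply Real.sqrt_le_sqrt
          have hk1' : (1:ℝ) ≤ (k:ℝ) := by exact_mod_cast hk1
          linarith
        have h2 : Real.sqrt (k:ℝ) = (k:ℝ) ^ (1/2 : ℝ) := Real.sqrt_eq_rpow (k:ℝ)
        have h3 : ((k:ℝ)^(2*r) : ℝ) = (k:ℝ) ^ ((2*(r:ℝ)) : ℝ) := by
          rw [← Real.rpow_natCast (k:ℝ) (2*r)]
          push_cast
          ring_nf
        calc Real.sqrt ((k:ℝ) + 1/2) * (k:ℝ)^(2*r)
            ≤ (Real.sqrt 2 * Real.sqrt (k:ℝ)) * (k:ℝ)^(2*r) := by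
              apply mul_le_mul_of_nonneg_right h1 (by positivity)
          _ = Real.sqrt 2 * ((k:ℝ) ^ ((2*(r:ℝ)) : ℝ) * (k:ℝ) ^ (1/2 : ℝ)) := by
              rw [h2, h3]; ring
          _ = Real.sqrt 2 * (k:ℝ) ^ ((2*(r:ℝ)) + 1/2 : ℝ) := by
              rw [← Real.rpow_add hk0]

open MeasureTheory in
lemma count_ae_all {P : ℕ → Prop} (h : ∀ᵐ k ∂(Measure.count : Measure ℕ), P k) : ∀ k, P k := by
  have h0 : (Measure.count : Measure ℕ) {k | ¬ P k} = 0 := ae_iff.mp h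
  have he : {k | ¬ P k} = (∅ : Set ℕ) := Measure.count_eq_zero_iff.mp h0
  intro k
  by_contra hk
  have : k ∈ {k | ¬ P k} := hk
  rw [he] at this
  exact this

open MeasureTheory in
lemma lp_sum_bound (p : ℝ≥0∞) (hp : 1 ≤ p) (ξ : ℕ → ℝ) (δ : ℝ) (hδ : 0 < δ)
    (hξ : eLpNorm ξ p Measure.count ≤ ENNReal.ofReal δ) (F : Finset ℕ) (N : ℕ)
    (hcard : F.card ≤ N) (hN : 1 ≤ N) :
    ∑ k ∈ F, |ξ k| ≤ δ * (N:ℝ) ^ (1 - 1/p.toReal : ℝ) := by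
  have hN0 : (0:ℝ) < (N:ℝ) := by exact_mod_cast hN
  have henorm : ∀ k, (‖ξ k‖₊ : ℝ≥0∞) = ENNReal.ofReal |ξ k| := by
    intro k
    rw [← enorm_eq_nnnorm, ← ofReal_norm, Real.norm_eq_abs]
  rcases eq_or_ne p (⊤ : ℝ≥0∞) with hptop | hptop
  · -- p = ∞
    subst hptop
    rw [ENNReal.toReal_top]
    have hsup : ∀ k, |ξ k| ≤ δ := by
      rw [eLpNorm_exponent_top] at hξ
      have hall := count_ae_all (ae_le_eLpNormEssSup (f := ξ) (μ := Measure.count))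
      intro k
      have h2 := (hall k).trans hξ
      rw [enorm_eq_nnnorm, henorm k] at h2
      rwa [ENNReal.ofReal_le_ofReal_iff hδ.le] at h2
    calc ∑ k ∈ F, |ξ k| ≤ ∑ _k ∈ F, δ := Finset.sum_le_sum (fun k _ => hsup k)
      _ = F.card * δ := by rw [Finset.sum_const]; ring
      _ ≤ N * δ := by
          apply mul_le_mul_of_nonneg_right _ hδ.le
          exact_mod_cast hcard
      _ = δ * (N:ℝ) ^ (1 - 1/(0:ℝ) : ℝ) := by norm_num [mul_comm]
  · -- p finite
    have hp0 : p ≠ 0 := by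
      intro h; rw [h] at hp; exact absurd hp (by simp)
    set q : ℝ := p.toReal with hq
    have hq1 : 1 ≤ q := by
      rw [hq, ← ENNReal.toReal_one]
      exact ENNReal.toReal_mono hptop hp
    have hq0 : 0 < q := lt_of_lt_of_le one_pos hq1
    rw [eLpNorm_eq_lintegral_rpow_enorm_toReal hp0 hptop, MeasureTheory.lintegral_count] at hξ
    -- pass to q-th powers
    have hS : (∑' k, (‖ξ k‖₊ : ℝ≥0∞) ^ q) ≤ ENNReal.ofReal (δ ^ q) := by
      have h1 := ENNReal.rpow_le_rpow hξ hq0.le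
      rw [← ENNReal.rpow_mul, one_div, inv_mul_cancel₀ (ne_of_gt hq0), ENNReal.rpow_one] at h1
      rwa [← ENNReal.ofReal_rpow_of_pos hδ]
    have hF : (∑ k ∈ F, (‖ξ k‖₊ : ℝ≥0∞) ^ q) ≤ ENNReal.ofReal (δ ^ q) :=
      le_trans (ENNReal.sum_le_tsum F) hS
    have hFr : ∑ k ∈ F, |ξ k| ^ q ≤ δ ^ q := by
      have h2 : (∑ k ∈ F, (‖ξ k‖₊ : ℝ≥0∞) ^ q) = ENNReal.ofReal (∑ k ∈ F, |ξ k| ^ q) := by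
        rw [ENNReal.ofReal_sum_of_nonneg (fun k _ => by positivity)]
        congr 1
        funext k
        rw [henorm k, ← ENNReal.ofReal_rpow_of_nonneg (abs_nonneg _) hq0.le]
      rw [h2] at hF
      rwa [ENNReal.ofReal_le_ofReal_iff (by positivity)] at hF
    -- Jensen / Hölder on the finite set
    have hJ : (∑ k ∈ F, |ξ k|) ^ q ≤ (F.card : ℝ) ^ (q - 1) * ∑ k ∈ F, |ξ k| ^ q :=
      Real.rpow_sum_le_const_mul_sum_rpow F ξ hq1
    have hJ2 : (∑ k ∈ F, |ξ k|) ^ q ≤ (N : ℝ) ^ (q - 1) * δ ^ q := by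
      calc (∑ k ∈ F, |ξ k|) ^ q ≤ (F.card : ℝ) ^ (q - 1) * ∑ k ∈ F, |ξ k| ^ q := hJ
        _ ≤ (N : ℝ) ^ (q - 1) * δ ^ q := by
            apply mul_le_mul _ hFr (Finset.sum_nonneg (fun k _ => by positivity)) (by positivity)
            apply Real.rpow_le_rpow (by positivity) (by exact_mod_cast hcard) (by linarith)
    have hsum0 : (0:ℝ) ≤ ∑ k ∈ F, |ξ k| := Finset.sum_nonneg (fun k _ => abs_nonneg _)
    have h3 : ∑ k ∈ F, |ξ k| ≤ ((N : ℝ) ^ (q - 1) * δ ^ q) ^ (1/q) := by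
      have h4 := Real.rpow_le_rpow (by positivity) hJ2 (by positivity : (0:ℝ) ≤ 1/q)
      rwa [one_div, Real.rpow_rpow_inv hsum0 (ne_of_gt hq0), ← one_div] at h4
    have h5 : ((N : ℝ) ^ (q - 1) * δ ^ q) ^ (1/q) = δ * (N:ℝ) ^ (1 - 1/q) := by
      rw [Real.mul_rpow (by positivity) (by positivity)]
      rw [one_div, Real.rpow_rpow_inv hδ.le (ne_of_gt hq0)]
      rw [← Real.rpow_mul hN0.le]
      have : (q - 1) * q⁻¹ = 1 - 1/q := by field_simp
      rw [this]
      ring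
    rw [← h5]
    exact h3


end Aux

/-- perturbation bound in the uniform metric:
`‖D_N^{(r)}f - D_N^{(r)}f^δ‖_C ≤ c δ N^{2r-1/p+3/2}` under `‖ξ‖_{ℓ_p} ≤ δ`. -/
theorem stmt_4 (r : ℕ) (hr : 1 ≤ r) (p : ℝ≥0∞) (hp : 1 ≤ p) :
    ∃ c : ℝ, 0 < c ∧ ∀ (δ : ℝ), 0 < δ → δ < 1 → ∀ f fδ : ℝ → ℝ,
      eLpNorm (fun k : ℕ => coef f k - coef fδ k) p (Measure.count) ≤ ENNReal.ofReal δ →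
      ∀ N : ℕ, r ≤ N → ∀ t ∈ Set.Icc (-1:ℝ) 1,
        |DN (coef f) r N t - DN (coef fδ) r N t| ≤
          c * δ * (N : ℝ) ^ (2 * r - 1 / p.toReal + 3 / 2) := by
  refine ⟨Real.sqrt 2, Real.sqrt_pos.mpr two_pos, ?_⟩
  intro δ hδ0 hδ1 f fδ hξ N hN t ht
  set ξ : ℕ → ℝ := fun k => coef f k - coef fδ k with hxi
  have hNr1 : 1 ≤ N := le_trans hr hN
  have hN0 : (0:ℝ) < (N:ℝ) := by exact_mod_cast hNr1
  have hdiff : DN (coef f) r N t - DN (coef fδ) r N t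
      = ∑ k ∈ Finset.Icc r N, ξ k * iteratedDeriv r (phi k) t := by
    unfold DN
    rw [← Finset.sum_sub_distrib]
    apply Finset.sum_congr rfl
    intros; ring
  rw [hdiff]
  set E1 : ℝ := 2*(r:ℝ) + 1/2 with hE1
  have hE1pos : (0:ℝ) ≤ E1 := by rw [hE1]; positivity
  have hterm : ∀ k ∈ Finset.Icc r N, |ξ k * iteratedDeriv r (phi k) t|
      ≤ |ξ k| * (Real.sqrt 2 * (N:ℝ)^E1) := by
    intro k hk
    obtain ⟨hk1, hk2⟩ := Finset.mem_Icc.mp hk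
    rw [abs_mul]
    apply mul_le_mul_of_nonneg_left _ (abs_nonneg _)
    calc |iteratedDeriv r (phi k) t|
        ≤ Real.sqrt 2 * (k:ℝ)^E1 := phi_bound k r (le_trans hr hk1) hk1 t ht
      _ ≤ Real.sqrt 2 * (N:ℝ)^E1 := by
          apply mul_le_mul_of_nonneg_left _ (Real.sqrt_nonneg 2)
          exact Real.rpow_le_rpow (by positivity) (by exact_mod_cast hk2) hE1pos
  have hcard : (Finset.Icc r N).card ≤ N := by
    rw [Nat.card_Icc]
    omega
  have hsum := lp_sum_bound p hp ξ δ hδ0 hξ (Finset.Icc r N) N hcard hNr1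
  have h7 : (N:ℝ)^E1 * (N:ℝ)^(1 - 1/p.toReal : ℝ)
      = (N:ℝ)^(2*(r:ℝ) - 1/p.toReal + 3/2 : ℝ) := by
    rw [← Real.rpow_add hN0]
    congr 1
    rw [hE1]; ring
  calc |∑ k ∈ Finset.Icc r N, ξ k * iteratedDeriv r (phi k) t|
      ≤ ∑ k ∈ Finset.Icc r N, |ξ k * iteratedDeriv r (phi k) t| :=
        Finset.abs_sum_le_sum_abs _ _
    _ ≤ ∑ k ∈ Finset.Icc r N, |ξ k| * (Real.sqrt 2 * (N:ℝ)^E1) :=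
        Finset.sum_le_sum hterm
    _ = (Real.sqrt 2 * (N:ℝ)^E1) * ∑ k ∈ Finset.Icc r N, |ξ k| := by
        rw [← Finset.sum_mul]; ring
    _ ≤ (Real.sqrt 2 * (N:ℝ)^E1) * (δ * (N:ℝ)^(1 - 1/p.toReal : ℝ)) := by
        apply mul_le_mul_of_nonneg_left hsum (by positivity)
    _ = Real.sqrt 2 * δ * (N : ℝ) ^ (2 * (r:ℝ) - 1 / p.toReal + 3 / 2) := by
        rw [← h7]; ring
end

section
/- Let f ∈ W_s^μ with 1 ≤ s < ∞, μ > 2r − 1/s + 3/2, and suppose the coefficient perturbation satisfies ‖ξ‖_{ℓ_p} ≤ δ for some 1 ≤ p ≤ ∞ and 0 < δ < 1. Then choosing N ≍ δ^{−1/(μ − 1/p + 1/s)}, the truncation method satisfies ‖f^{(r)} − D_N^{(r)} f^δ‖_C ≤ c · δ^{(μ − 2r + 1/s − 3/2)/(μ − 1/p + 1/s)} with c independent of f (with ‖f‖_{s,μ} ≤ 1) and δ. -/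
open MeasureTheory Set ENNReal

section AuxLemmas
open Polynomial



open Polynomial

noncomputable def LQ (n : ℕ) : Polynomial ℝ := derivative^[n] ((X^2 - 1)^n)

lemma iterD_X_mul (q : Polynomial ℝ) (m : ℕ) :
    derivative^[m+1] (X * q) = X * derivative^[m+1] q + ((m:ℝ[X])+1) * derivative^[m] q := by
  induction m with
  | zero => simp [derivative_mul]; ring
  | succ m ih =>
      rw [Function.iterate_succ_apply', ih]
      rw [show derivative^[m+1+1] q = derivative (derivative^[m+1] q) from
        (Function.iterate_succ_apply' _ _ _), show derivative^[m+1] q = derivative (derivative^[m] q) from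
        (Function.iterate_succ_apply' _ _ _)]
      simp [derivative_mul]
      ring

lemma iterD_sq_mul (q : Polynomial ℝ) (m : ℕ) :
    derivative^[m+2] ((X^2 - 1) * q) = (X^2-1) * derivative^[m+2] q
      + (2*(m:ℝ[X])+4) * (X * derivative^[m+1] q) + ((m:ℝ[X])+2)*((m:ℝ[X])+1) * derivative^[m] q := by
  induction m with
  | zero =>
      show derivative (derivative ((X^2-1) * q)) = _
      simp [derivative_mul, derivative_pow, map_ofNat]
      ring
  | succ m ih =>
      rw [Function.iterate_succ_apply', ih]
      rw [show derivative^[m+2+1] q = derivative (derivative^[m+2] q) from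
        (Function.iterate_succ_apply' _ _ _),
        show derivative^[m+1+1] q = derivative (derivative^[m+1] q) from
        (Function.iterate_succ_apply' _ _ _),
        show derivative^[m+1] q = derivative (derivative^[m] q) from
        (Function.iterate_succ_apply' _ _ _)]
      simp [derivative_mul, derivative_pow, map_ofNat]
      push_cast
      ring

lemma LQ_ode (n : ℕ) :
    (X^2 - 1) * derivative (derivative (LQ n)) + 2 * (X * derivative (LQ n))
      = ((n:ℝ[X]) * ((n:ℝ[X])+1)) * LQ n := by
  cases n with
  | zero => simp [LQ]
  | succ m =>
      have hE : (X^2 - 1) * derivative ((X^2-1)^(m+1)) = C (2*(m:ℝ)+2) * (X * (X^2-1)^(m+1)) := by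
        rw [derivative_pow]
        have : derivative (X^2 - 1 : ℝ[X]) = 2 * X := by
          simp [derivative_pow, map_ofNat]
        rw [this]
        simp only [Nat.add_sub_cancel, map_add, map_mul, map_ofNat, map_one,
          Polynomial.C_eq_natCast, Nat.cast_add, Nat.cast_one]
        rw [pow_succ]
        ring
      have hcong := congrArg (derivative^[m+2]) hE
      rw [iterate_derivative_C_mul] at hcong
      rw [show ((X:ℝ[X])^2-1) * derivative ((X^2-1)^(m+1))
            = (X^2-1) * derivative ((X^2-1)^(m+1)) from rfl] at hcong
      rw [iterD_sq_mul, iterD_X_mul] at hcong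
      -- translate iterates of derivative of u into plain iterates
      have h1 : ∀ k : ℕ, derivative^[k] (derivative ((X^2-1)^(m+1) : ℝ[X]))
          = derivative^[k+1] ((X^2-1)^(m+1)) := by
        intro k; rw [Function.iterate_succ_apply]
      rw [h1, h1, h1] at hcong
      have e2 : derivative (derivative (LQ (m+1))) = derivative^[m+3] ((X^2-1)^(m+1)) := by
        unfold LQ
        rw [← Function.iterate_succ_apply' derivative (m+1), ← Function.iterate_succ_apply' derivative (m+2)]
      have e1 : derivative (LQ (m+1)) = derivative^[m+2] ((X^2-1)^(m+1)) := by
        unfold LQ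
        rw [← Function.iterate_succ_apply' derivative (m+1)]
      rw [e2, e1]
      unfold LQ
      rw [show m+1+2 = m+3 from rfl, show m+1+1 = m+2 from rfl] at hcong
      simp only [map_add, map_mul, map_ofNat, Polynomial.C_eq_natCast] at hcong
      push_cast at hcong ⊢
      linear_combination hcong

lemma LQ_ode_r (n r : ℕ) :
    (X^2 - 1) * derivative (derivative (derivative^[r] (LQ n)))
      + (2*(r:ℝ[X])+2) * (X * derivative (derivative^[r] (LQ n)))
      = ((n:ℝ[X]) * ((n:ℝ[X])+1) - (r:ℝ[X])*((r:ℝ[X])+1)) * derivative^[r] (LQ n) := by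
  induction r with
  | zero =>
      simpa using LQ_ode n
  | succ r ih =>
      have hD := congrArg derivative ih
      simp only [derivative_mul, derivative_add, derivative_sub, derivative_X, derivative_one,
        derivative_pow, derivative_natCast, derivative_ofNat, Function.iterate_succ_apply'] at hD ⊢
      push_cast at hD ⊢
      simp only [map_ofNat] at hD ⊢
      linear_combination hD

lemma iterD_linear_pow_mul (a : ℝ) :
    ∀ (k m : ℕ) (q : ℝ[X]), ∃ g : ℝ[X], derivative^[k] ((X - C a)^(m+k) * q)
      = (X - C a)^m * ((((m+k).descFactorial k : ℕ) : ℝ[X]) * q + (X - C a) * g) := by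
  intro k
  induction k with
  | zero => intro m q; exact ⟨0, by simp⟩
  | succ k ih =>
      intro m q
      have hstep : derivative ((X - C a)^(m+(k+1)) * q)
          = (X - C a)^(m+k) * ((((m+k+1:ℕ)) : ℝ[X]) * q + (X - C a) * derivative q) := by
        rw [derivative_mul, derivative_pow]
        simp only [derivative_sub, derivative_X, derivative_C, sub_zero, mul_one,
          Polynomial.C_eq_natCast]
        rw [show m+(k+1) = (m+k)+1 from rfl, Nat.add_sub_cancel, pow_succ]
        push_cast
        ring
      rw [Function.iterate_succ_apply, hstep]
      obtain ⟨g, hg⟩ := ih m ((((m+k+1:ℕ)) : ℝ[X]) * q + (X - C a) * derivative q)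
      refine ⟨(((m+k).descFactorial k : ℕ) : ℝ[X]) * derivative q + g, ?_⟩
      rw [hg]
      have hdf : ((m+k+1).descFactorial (k+1) : ℕ) = (m+k+1) * ((m+k).descFactorial k) := by
        rw [show m+k+1 = (m+k)+1 from rfl, Nat.succ_descFactorial_succ]
      rw [show m+(k+1) = m+k+1 from rfl, hdf]
      push_cast
      ring

lemma LQ_eval_one (n : ℕ) : (LQ n).eval 1 = 2^n * n.factorial := by
  have hfac : ((X:ℝ[X])^2 - 1)^n = (X - C 1)^(0+n) * (X + C 1)^n := by
    rw [zero_add, ← mul_pow]; norm_num; ring_nf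
  obtain ⟨g, hg⟩ := iterD_linear_pow_mul 1 n 0 ((X + C 1)^n)
  unfold LQ
  rw [hfac, hg]
  simp [Nat.descFactorial_self]
  ring

lemma LQ_eval_negone (n : ℕ) : (LQ n).eval (-1) = (-2)^n * n.factorial := by
  have hfac : ((X:ℝ[X])^2 - 1)^n = (X - C (-1))^(0+n) * (X - C 1)^n := by
    rw [zero_add, ← mul_pow]; norm_num; ring_nf
  obtain ⟨g, hg⟩ := iterD_linear_pow_mul (-1) n 0 ((X - C 1)^n)
  unfold LQ
  rw [hfac, hg]
  simp [Nat.descFactorial_self]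
  ring

lemma LQ_endpoint (n : ℕ) : ∀ j, j ≤ n →
    |((derivative^[j] (LQ n)).eval 1)| ≤ 2^n * n.factorial * ((n:ℝ)+1)^(2*j)
    ∧ |((derivative^[j] (LQ n)).eval (-1))| ≤ 2^n * n.factorial * ((n:ℝ)+1)^(2*j) := by
  intro j
  induction j with
  | zero =>
      intro _
      simp only [Function.iterate_zero_apply, Nat.mul_zero, pow_zero, mul_one, LQ_eval_one, LQ_eval_negone]
      constructor
      · rw [abs_of_nonneg (by positivity)]
      · rw [abs_mul, abs_pow, abs_neg, abs_of_nonneg (by norm_num : (0:ℝ) ≤ 2),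
          abs_of_nonneg (by positivity : (0:ℝ) ≤ (n.factorial : ℝ))]
  | succ j ih =>
      intro hj
      obtain ⟨ih1, ih2⟩ := ih (le_trans (Nat.le_succ j) hj)
      have hode := LQ_ode_r n j
      have hμ0 : (0:ℝ) ≤ (n:ℝ) * ((n:ℝ)+1) - (j:ℝ)*((j:ℝ)+1) := by
        have hjn : (j:ℝ) ≤ (n:ℝ) := by exact_mod_cast le_trans (Nat.le_succ j) hj
        nlinarith [Nat.cast_nonneg (α := ℝ) j]
      have hμle : (n:ℝ) * ((n:ℝ)+1) - (j:ℝ)*((j:ℝ)+1) ≤ ((n:ℝ)+1)^2 := by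
        nlinarith [Nat.cast_nonneg (α := ℝ) j, Nat.cast_nonneg (α := ℝ) n]
      have hB : (0:ℝ) ≤ 2^n * n.factorial * ((n:ℝ)+1)^(2*j) := by positivity
      constructor
      · have h1 := congrArg (Polynomial.eval (1:ℝ)) hode
        simp only [eval_mul, eval_add, eval_sub, eval_pow, eval_X, eval_one, eval_natCast,
          Function.iterate_succ_apply'] at h1 ⊢
        norm_num at h1
        have habs : (2*(j:ℝ)+2) * |(derivative (derivative^[j] (LQ n))).eval 1|
            = ((n:ℝ) * ((n:ℝ)+1) - (j:ℝ)*((j:ℝ)+1)) * |(derivative^[j] (LQ n)).eval 1| := by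
          rw [← abs_of_nonneg hμ0, ← abs_mul, ← h1, abs_mul,
            abs_of_nonneg (by positivity : (0:ℝ) ≤ 2*(j:ℝ)+2)]
        have h2 : (2*(j:ℝ)+2) * |(derivative (derivative^[j] (LQ n))).eval 1|
            ≤ ((n:ℝ)+1)^2 * (2^n * n.factorial * ((n:ℝ)+1)^(2*j)) := by
          rw [habs]
          exact mul_le_mul hμle ih1 (abs_nonneg _) (by positivity)
        have h3 : |(derivative (derivative^[j] (LQ n))).eval 1|
            ≤ ((n:ℝ)+1)^2 * (2^n * n.factorial * ((n:ℝ)+1)^(2*j)) := by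
          nlinarith [abs_nonneg ((derivative (derivative^[j] (LQ n))).eval 1),
            Nat.cast_nonneg (α := ℝ) j]
        calc |(derivative (derivative^[j] (LQ n))).eval 1|
            ≤ ((n:ℝ)+1)^2 * (2^n * n.factorial * ((n:ℝ)+1)^(2*j)) := h3
          _ = 2^n * n.factorial * ((n:ℝ)+1)^(2*(j+1)) := by ring
      · have h1 := congrArg (Polynomial.eval (-1:ℝ)) hode
        simp only [eval_mul, eval_add, eval_sub, eval_pow, eval_X, eval_one, eval_natCast,
          Function.iterate_succ_apply'] at h1 ⊢
        norm_num at h1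
        have habs : (2*(j:ℝ)+2) * |(derivative (derivative^[j] (LQ n))).eval (-1)|
            = ((n:ℝ) * ((n:ℝ)+1) - (j:ℝ)*((j:ℝ)+1)) * |(derivative^[j] (LQ n)).eval (-1)| := by
          have hneg : -((2*(j:ℝ)+2) * ((derivative (derivative^[j] (LQ n))).eval (-1)))
              = ((n:ℝ) * ((n:ℝ)+1) - (j:ℝ)*((j:ℝ)+1)) * (derivative^[j] (LQ n)).eval (-1) := by
            linarith [h1]
          rw [← abs_of_nonneg hμ0, ← abs_mul, ← hneg, abs_neg, abs_mul,
            abs_of_nonneg (by positivity : (0:ℝ) ≤ 2*(j:ℝ)+2)]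
        have h2 : (2*(j:ℝ)+2) * |(derivative (derivative^[j] (LQ n))).eval (-1)|
            ≤ ((n:ℝ)+1)^2 * (2^n * n.factorial * ((n:ℝ)+1)^(2*j)) := by
          rw [habs]
          exact mul_le_mul hμle ih2 (abs_nonneg _) (by positivity)
        have h3 : |(derivative (derivative^[j] (LQ n))).eval (-1)|
            ≤ ((n:ℝ)+1)^2 * (2^n * n.factorial * ((n:ℝ)+1)^(2*j)) := by
          nlinarith [abs_nonneg ((derivative (derivative^[j] (LQ n))).eval (-1)),
            Nat.cast_nonneg (α := ℝ) j]
        calc |(derivative (derivative^[j] (LQ n))).eval (-1)|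
            ≤ ((n:ℝ)+1)^2 * (2^n * n.factorial * ((n:ℝ)+1)^(2*j)) := h3
          _ = 2^n * n.factorial * ((n:ℝ)+1)^(2*(j+1)) := by ring

lemma LQ_max_principle (n r : ℕ) (hrn : r < n) {t : ℝ} (ht : t ∈ Set.Icc (-1:ℝ) 1) :
    ((derivative^[r] (LQ n)).eval t)^2
      ≤ max (((derivative^[r] (LQ n)).eval 1)^2) (((derivative^[r] (LQ n)).eval (-1))^2) := by
  set y : ℝ[X] := derivative^[r] (LQ n) with hy
  set H : ℝ[X] := ((n:ℝ[X])*((n:ℝ[X])+1) - (r:ℝ[X])*((r:ℝ[X])+1)) * y^2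
      + (1 - X^2) * (derivative y)^2 with hH
  have hode := LQ_ode_r n r
  have hder : derivative H = (4*(r:ℝ[X])+2) * (X * (derivative y)^2) := by
    rw [hH]
    simp only [derivative_add, derivative_sub, derivative_mul, derivative_pow, derivative_one,
      derivative_X, derivative_natCast, derivative_ofNat, map_ofNat, Polynomial.C_eq_natCast,
      Nat.cast_ofNat]
    push_cast
    linear_combination (-2 * derivative y) * hode
  have hμR : (0:ℝ) < (n:ℝ)*((n:ℝ)+1) - (r:ℝ)*((r:ℝ)+1) := by
    have : (r:ℝ) < (n:ℝ) := by exact_mod_cast hrn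
    nlinarith [Nat.cast_nonneg (α := ℝ) r]
  set F : ℝ → ℝ := fun x => H.eval x with hF
  have hderiv : ∀ x : ℝ, deriv F x = (4*(r:ℝ)+2) * (x * ((derivative y).eval x)^2) := by
    intro x
    rw [hF]
    rw [Polynomial.deriv, hder]
    simp
  have hcont : Continuous F := H.continuous
  have hmono : MonotoneOn F (Set.Icc (0:ℝ) 1) := by
    apply monotoneOn_of_deriv_nonneg (convex_Icc 0 1) hcont.continuousOn
      (H.differentiable.differentiableOn)
    · intro x hx
      rw [interior_Icc] at hx
      rw [hderiv]
      have : (0:ℝ) ≤ x := le_of_lt hx.1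
      positivity
  have hanti : AntitoneOn F (Set.Icc (-1:ℝ) 0) := by
    apply antitoneOn_of_deriv_nonpos (convex_Icc (-1) 0) hcont.continuousOn
      (H.differentiable.differentiableOn)
    · intro x hx
      rw [interior_Icc] at hx
      rw [hderiv]
      have hx0 : x ≤ 0 := le_of_lt hx.2
      have h1 : (0:ℝ) ≤ (4*(r:ℝ)+2) := by positivity
      have h2 : x * ((derivative y).eval x)^2 ≤ 0 :=
        mul_nonpos_of_nonpos_of_nonneg hx0 (sq_nonneg _)
      exact mul_nonpos_of_nonneg_of_nonpos h1 h2
  have hF1 : F 1 = ((n:ℝ)*((n:ℝ)+1) - (r:ℝ)*((r:ℝ)+1)) * (y.eval 1)^2 := by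
    rw [hF, hH]; simp; try ring
  have hFm1 : F (-1) = ((n:ℝ)*((n:ℝ)+1) - (r:ℝ)*((r:ℝ)+1)) * (y.eval (-1))^2 := by
    rw [hF, hH]; simp; try ring
  have hlow : ((n:ℝ)*((n:ℝ)+1) - (r:ℝ)*((r:ℝ)+1)) * (y.eval t)^2 ≤ F t := by
    rw [hF, hH]
    simp only [eval_add, eval_mul, eval_sub, eval_pow, eval_one, eval_X, eval_natCast]
    have h1 : (0:ℝ) ≤ 1 - t^2 := by
      obtain ⟨h1, h2⟩ := ht; nlinarith
    nlinarith [sq_nonneg ((derivative y).eval t)]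
  have hup : F t ≤ max (F 1) (F (-1)) := by
    rcases le_total t 0 with h0 | h0
    · exact le_max_of_le_right (hanti ⟨le_refl _, by norm_num⟩ ⟨ht.1, h0⟩ ht.1)
    · exact le_max_of_le_left (hmono ⟨h0, ht.2⟩ ⟨by norm_num, le_refl _⟩ ht.2)
  have : ((n:ℝ)*((n:ℝ)+1) - (r:ℝ)*((r:ℝ)+1)) * (y.eval t)^2
      ≤ ((n:ℝ)*((n:ℝ)+1) - (r:ℝ)*((r:ℝ)+1)) * max ((y.eval 1)^2) ((y.eval (-1))^2) := by
    calc _ ≤ max (F 1) (F (-1)) := le_trans hlow hup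
      _ = _ := by rw [hF1, hFm1, ← mul_max_of_nonneg _ _ (le_of_lt hμR)]
  exact le_of_mul_le_mul_left (by linarith [this]) hμR

lemma natDegree_LQ (n : ℕ) : (LQ n).natDegree ≤ n := by
  have h1 : ((X:ℝ[X])^2 - 1).natDegree ≤ 2 := by
    refine le_trans (natDegree_sub_le _ _) ?_
    simp [natDegree_X_pow]
  have h2 : (((X:ℝ[X])^2 - 1)^n).natDegree ≤ 2*n := by
    refine le_trans (natDegree_pow_le) ?_
    calc n * ((X:ℝ[X])^2 - 1).natDegree ≤ n * 2 := Nat.mul_le_mul_left n h1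
      _ = 2*n := by ring
  unfold LQ
  refine le_trans (natDegree_iterate_derivative _ _) ?_
  omega

lemma LQ_deriv_bound (n r : ℕ) {t : ℝ} (ht : t ∈ Set.Icc (-1:ℝ) 1) :
    |(derivative^[r] (LQ n)).eval t| ≤ 2^n * n.factorial * ((n:ℝ)+1)^(2*r) := by
  rcases lt_trichotomy n r with hnr | hnr | hnr
  · -- n < r : the polynomial is zero
    have hz : derivative^[r] (LQ n) = 0 := by
      unfold LQ
      rw [← Function.iterate_add_apply]
      apply iterate_derivative_eq_zero
      have h2 : (((X:ℝ[X])^2 - 1)^n).natDegree ≤ 2*n := by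
        refine le_trans (natDegree_pow_le) ?_
        have h1 : ((X:ℝ[X])^2 - 1).natDegree ≤ 2 := by
          refine le_trans (natDegree_sub_le _ _) ?_
          simp [natDegree_X_pow]
        calc n * ((X:ℝ[X])^2 - 1).natDegree ≤ n * 2 := Nat.mul_le_mul_left n h1
          _ = 2*n := by ring
      omega
    rw [hz]
    simp
    positivity
  · -- n = r : constant polynomial
    subst hnr
    have hdeg : (derivative^[n] (LQ n)).natDegree = 0 := by
      have := natDegree_iterate_derivative (LQ n) n
      have := natDegree_LQ n
      omega
    obtain ⟨a, ha⟩ := Polynomial.natDegree_eq_zero.mp hdeg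
    have h1 := (LQ_endpoint n n (le_refl n)).1
    rw [← ha] at h1 ⊢
    simpa using h1
  · -- r < n : max principle
    have hmax := LQ_max_principle n r hnr ht
    obtain ⟨h1, h2⟩ := LQ_endpoint n r (le_of_lt hnr)
    set B : ℝ := 2^n * n.factorial * ((n:ℝ)+1)^(2*r) with hB
    have hB0 : 0 ≤ B := by positivity
    have hsq : ((derivative^[r] (LQ n)).eval t)^2 ≤ B^2 := by
      refine le_trans hmax (max_le ?_ ?_)
      · calc ((derivative^[r] (LQ n)).eval 1)^2 = |((derivative^[r] (LQ n)).eval 1)|^2 := (sq_abs _).symm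
          _ ≤ B^2 := by apply pow_le_pow_left₀ (abs_nonneg _) h1
      · calc ((derivative^[r] (LQ n)).eval (-1))^2 = |((derivative^[r] (LQ n)).eval (-1))|^2 := (sq_abs _).symm
          _ ≤ B^2 := by apply pow_le_pow_left₀ (abs_nonneg _) h2
    calc |(derivative^[r] (LQ n)).eval t| = Real.sqrt (((derivative^[r] (LQ n)).eval t)^2) :=
          (Real.sqrt_sq_eq_abs _).symm
      _ ≤ Real.sqrt (B^2) := Real.sqrt_le_sqrt hsq
      _ = B := by rw [Real.sqrt_sq hB0]

lemma LQ_deriv_zero {n r : ℕ} (h : n < r) : derivative^[r] (LQ n) = 0 := by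
  unfold LQ
  rw [← Function.iterate_add_apply]
  apply iterate_derivative_eq_zero
  have h2 : (((X:ℝ[X])^2 - 1)^n).natDegree ≤ 2*n := by
    refine le_trans (natDegree_pow_le) ?_
    have h1 : ((X:ℝ[X])^2 - 1).natDegree ≤ 2 := by
      refine le_trans (natDegree_sub_le _ _) ?_
      simp [natDegree_X_pow]
    calc n * ((X:ℝ[X])^2 - 1).natDegree ≤ n * 2 := Nat.mul_le_mul_left n h1
      _ = 2*n := by ring
  omega



lemma iteratedDeriv_polyeval (m : ℕ) (p : ℝ[X]) :
    iteratedDeriv m (fun x => p.eval x) = fun t => (derivative^[m] p).eval t := by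
  induction m generalizing p with
  | zero => simp
  | succ m ih =>
      rw [iteratedDeriv_succ']
      have : deriv (fun x => p.eval x) = fun x => (derivative p).eval x := by
        funext x; exact Polynomial.deriv p
      rw [this, ih, Function.iterate_succ_apply]

lemma psi_eq (k r : ℕ) : iteratedDeriv r (phi k)
    = fun t => (Real.sqrt ((k:ℝ)+1/2) * ((2:ℝ)^k * (Nat.factorial k : ℝ))⁻¹)
        * (derivative^[r] (LQ k)).eval t := by
  have hphi : phi k = fun t =>
      ((C (Real.sqrt ((k:ℝ)+1/2) * ((2:ℝ)^k * (Nat.factorial k : ℝ))⁻¹)) * LQ k).eval t := by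
    funext t
    unfold phi
    have hin : (fun s : ℝ => (s^2 - 1)^k) = fun s => (((X:ℝ[X])^2-1)^k).eval s := by
      funext s; simp
    rw [hin, iteratedDeriv_polyeval]
    simp [LQ]
  rw [hphi, iteratedDeriv_polyeval]
  funext t
  rw [iterate_derivative_C_mul]
  simp

lemma psi_zero {k r : ℕ} (h : k < r) (t : ℝ) : iteratedDeriv r (phi k) t = 0 := by
  rw [psi_eq, LQ_deriv_zero h]
  simp

lemma psi_bound (k r : ℕ) {t : ℝ} (ht : t ∈ Set.Icc (-1:ℝ) 1) :
    |iteratedDeriv r (phi k) t| ≤ ((k:ℝ)+1) ^ ((2*(r:ℝ)) + 1/2) := by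
  rw [psi_eq]
  have hk1 : (0:ℝ) < (k:ℝ)+1 := by positivity
  have hc : (0:ℝ) < (2:ℝ)^k * (Nat.factorial k : ℝ) := by positivity
  have hs : (0:ℝ) ≤ Real.sqrt ((k:ℝ)+1/2) := Real.sqrt_nonneg _
  rw [abs_mul]
  have h1 : |Real.sqrt ((k:ℝ)+1/2) * ((2:ℝ)^k * (Nat.factorial k : ℝ))⁻¹|
      = Real.sqrt ((k:ℝ)+1/2) * ((2:ℝ)^k * (Nat.factorial k : ℝ))⁻¹ := by
    rw [abs_of_nonneg]; positivity
  rw [h1]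
  calc Real.sqrt ((k:ℝ)+1/2) * ((2:ℝ)^k * (Nat.factorial k : ℝ))⁻¹ * |(derivative^[r] (LQ k)).eval t|
      ≤ Real.sqrt ((k:ℝ)+1/2) * ((2:ℝ)^k * (Nat.factorial k : ℝ))⁻¹
        * (2^k * (Nat.factorial k : ℝ) * ((k:ℝ)+1)^(2*r)) := by
        refine mul_le_mul_of_nonneg_left (LQ_deriv_bound k r ht) (by positivity)
    _ = Real.sqrt ((k:ℝ)+1/2) * ((k:ℝ)+1)^(2*r) := by
        field_simp
    _ ≤ ((k:ℝ)+1)^((1:ℝ)/2) * ((k:ℝ)+1)^((2*(r:ℝ)) : ℝ) := by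
        have e1 : Real.sqrt ((k:ℝ)+1/2) ≤ ((k:ℝ)+1)^((1:ℝ)/2) := by
          rw [← Real.sqrt_eq_rpow]
          apply Real.sqrt_le_sqrt
          linarith
        have e2 : ((k:ℝ)+1)^(2*r) = ((k:ℝ)+1)^((2*(r:ℝ)) : ℝ) := by
          rw [show (2*(r:ℝ)) = ((2*r : ℕ) : ℝ) by push_cast; ring, Real.rpow_natCast]
        rw [← e2]
        exact mul_le_mul_of_nonneg_right e1 (by positivity)
    _ = ((k:ℝ)+1) ^ ((2*(r:ℝ)) + 1/2) := by
        rw [← Real.rpow_add hk1]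
        ring_nf


lemma rpow_tail_step {γ : ℝ} (hγ : 1 < γ) {x : ℝ} (hx : 1 ≤ x) :
    (γ-1) * (x+1)^(-γ) ≤ x^(1-γ) - (x+1)^(1-γ) := by
  have hx0 : (0:ℝ) < x := lt_of_lt_of_le one_pos hx
  have hd : ∀ t ∈ Set.Icc x (x+1), HasDerivAt (fun u : ℝ => u^(1-γ))
      ((1-γ) * t^(1-γ-1)) t := by
    intro t ht
    exact Real.hasDerivAt_rpow_const (Or.inl (by nlinarith [ht.1] : t ≠ 0))
  obtain ⟨c, hc, hslope⟩ := exists_hasDerivAt_eq_slope (fun u : ℝ => u^(1-γ))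
    (fun t => (1-γ) * t^(1-γ-1)) (by linarith : x < x+1)
    (fun t ht => ((hd t ht).continuousAt).continuousWithinAt)
    (fun t ht => hd t (Set.mem_Icc_of_Ioo ht))
  have hc0 : 0 < c := lt_trans hx0 hc.1
  have hmono : (x+1)^(-γ) ≤ c^(-γ) :=
    Real.rpow_le_rpow_of_nonpos hc0 (le_of_lt hc.2) (by linarith)
  have hsimp : (x+1) - x = 1 := by ring
  rw [hsimp, div_one] at hslope
  have : (x+1)^(1-γ) - x^(1-γ) = (1-γ) * c^(1-γ-1) := hslope.symm
  have hexp : (1:ℝ)-γ-1 = -γ := by ring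
  rw [hexp] at this
  nlinarith [this, hmono, Real.rpow_nonneg (le_of_lt hc0) (-γ)]

lemma rpow_tail_sum {γ : ℝ} (hγ : 1 < γ) {N : ℕ} (hN : 1 ≤ N) :
    Summable (fun j : ℕ => ((N:ℝ)+1+(j:ℝ)) ^ (-γ)) ∧
    ∑' j : ℕ, ((N:ℝ)+1+(j:ℝ))^(-γ) ≤ (γ-1)⁻¹ * (N:ℝ)^(1-γ) := by
  have hN1 : (1:ℝ) ≤ (N:ℝ) := by exact_mod_cast hN
  have key : ∀ M : ℕ, ∑ j ∈ Finset.range M, ((N:ℝ)+1+(j:ℝ))^(-γ)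
      ≤ (γ-1)⁻¹ * (N:ℝ)^(1-γ) := by
    intro M
    have h1 : ∀ j : ℕ, (γ-1) * ((N:ℝ)+1+(j:ℝ))^(-γ)
        ≤ ((N:ℝ)+(j:ℝ))^(1-γ) - ((N:ℝ)+(j:ℝ)+1)^(1-γ) := by
      intro j
      have := rpow_tail_step hγ (x := (N:ℝ)+(j:ℝ))
        (by have : (0:ℝ) ≤ (j:ℝ) := Nat.cast_nonneg j; linarith)
      convert this using 3 <;> ring
    have h2 : (γ-1) * ∑ j ∈ Finset.range M, ((N:ℝ)+1+(j:ℝ))^(-γ)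
        ≤ ∑ j ∈ Finset.range M, (((N:ℝ)+(j:ℝ))^(1-γ) - ((N:ℝ)+(j+1:ℕ))^(1-γ)) := by
      rw [Finset.mul_sum]
      apply Finset.sum_le_sum
      intro j _
      have := h1 j
      push_cast
      simp only [add_assoc] at this ⊢; exact this
    rw [Finset.sum_range_sub' (fun j : ℕ => ((N:ℝ)+(j:ℝ))^(1-γ))] at h2
    have h3 : (γ-1) * ∑ j ∈ Finset.range M, ((N:ℝ)+1+(j:ℝ))^(-γ) ≤ (N:ℝ)^(1-γ) := by
      have h4 : (0:ℝ) ≤ ((N:ℝ)+(M:ℝ))^(1-γ) := Real.rpow_nonneg (by positivity) _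
      simp only [Nat.cast_zero, add_zero] at h2
      linarith
    have hγ1 : (0:ℝ) < γ - 1 := by linarith
    rw [mul_comm, ← le_div_iff₀ hγ1] at h3
    calc ∑ j ∈ Finset.range M, ((N:ℝ)+1+(j:ℝ))^(-γ) ≤ (N:ℝ)^(1-γ) / (γ-1) := h3
      _ = (γ-1)⁻¹ * (N:ℝ)^(1-γ) := by ring
  have hnonneg : ∀ j : ℕ, (0:ℝ) ≤ ((N:ℝ)+1+(j:ℝ))^(-γ) :=
    fun j => Real.rpow_nonneg (by positivity) _
  exact ⟨summable_of_sum_range_le hnonneg key, Real.tsum_le_of_sum_range_le hnonneg key⟩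

lemma noise_sum_bound (p : ℝ≥0∞) (hp : 1 ≤ p) (ξ : ℕ → ℝ) {δ : ℝ} (hδ : 0 ≤ δ)
    (h : eLpNorm ξ p Measure.count ≤ ENNReal.ofReal δ) (F : Finset ℕ) :
    ∑ k ∈ F, |ξ k| ≤ (F.card : ℝ) ^ (1 - 1/p.toReal) * δ := by
  by_cases hptop : p = ⊤
  · -- sup norm case
    subst hptop
    have hae : ∀ᵐ y ∂(Measure.count : Measure ℕ), ‖ξ y‖₊ ≤ eLpNormEssSup ξ Measure.count :=
      ae_le_eLpNormEssSup
    have hall : ∀ k : ℕ, |ξ k| ≤ δ := by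
      intro k
      by_contra hcon
      rw [Filter.eventually_iff, mem_ae_iff] at hae
      have hks : {k} ⊆ {y : ℕ | ‖ξ y‖₊ ≤ eLpNormEssSup ξ Measure.count}ᶜ := by
        intro x hx
        simp only [Set.mem_singleton_iff] at hx
        subst hx
        simp only [Set.mem_compl_iff, Set.mem_setOf_eq, not_le]
        by_contra hc2
        push_neg at hc2
        apply hcon
        have h2 : (‖ξ x‖₊ : ℝ≥0∞) ≤ ENNReal.ofReal δ := by
          calc (‖ξ x‖₊ : ℝ≥0∞) ≤ eLpNormEssSup ξ Measure.count := hc2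
            _ = eLpNorm ξ ⊤ Measure.count := (eLpNorm_exponent_top).symm
            _ ≤ ENNReal.ofReal δ := h
        rw [← ENNReal.ofReal_coe_nnreal, coe_nnnorm, Real.norm_eq_abs] at h2
        exact (ENNReal.ofReal_le_ofReal_iff hδ).mp h2
      have := measure_mono_null hks hae
      rw [Measure.count_singleton] at this
      exact one_ne_zero this
    calc ∑ k ∈ F, |ξ k| ≤ ∑ k ∈ F, δ := Finset.sum_le_sum (fun k _ => hall k)
      _ = (F.card : ℝ) * δ := by rw [Finset.sum_const]; ring
      _ = (F.card : ℝ) ^ (1 - 1/(⊤:ℝ≥0∞).toReal) * δ := by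
          norm_num
  · -- finite p
    set P := p.toReal with hP
    have hp0 : p ≠ 0 := by
      intro h0; rw [h0] at hp; exact absurd hp (by simp)
    have hP1 : 1 ≤ P := by
      rw [hP, ← ENNReal.toReal_one]
      exact ENNReal.toReal_mono hptop hp
    have hP0 : 0 < P := lt_of_lt_of_le one_pos hP1
    have hsn : eLpNorm ξ p Measure.count
        = (∑' k : ℕ, (‖ξ k‖₊ : ℝ≥0∞)^P)^(1/P) := by
      rw [eLpNorm_eq_lintegral_rpow_enorm_toReal hp0 hptop, lintegral_count]; rfl
    rw [hsn] at h
    have hT : ∑' k : ℕ, (‖ξ k‖₊ : ℝ≥0∞)^P ≤ ENNReal.ofReal (δ^P) := by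
      have := ENNReal.rpow_le_rpow h (le_of_lt hP0)
      rw [← ENNReal.rpow_mul, one_div, inv_mul_cancel₀ (ne_of_gt hP0), ENNReal.rpow_one] at this
      rwa [← ENNReal.ofReal_rpow_of_nonneg hδ (le_of_lt hP0)]
    have hsumF : ∑ k ∈ F, |ξ k|^P ≤ δ^P := by
      have h1 : ENNReal.ofReal (∑ k ∈ F, |ξ k|^P) ≤ ENNReal.ofReal (δ^P) := by
        rw [ENNReal.ofReal_sum_of_nonneg (fun k _ => Real.rpow_nonneg (abs_nonneg _) _)]
        calc ∑ k ∈ F, ENNReal.ofReal (|ξ k|^P) = ∑ k ∈ F, (‖ξ k‖₊ : ℝ≥0∞)^P := by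
              apply Finset.sum_congr rfl
              intro k _
              rw [← ENNReal.ofReal_rpow_of_nonneg (abs_nonneg _) (le_of_lt hP0),
                ← Real.norm_eq_abs, ← coe_nnnorm, ENNReal.ofReal_coe_nnreal]
          _ ≤ ∑' k : ℕ, (‖ξ k‖₊ : ℝ≥0∞)^P := ENNReal.sum_le_tsum F
          _ ≤ ENNReal.ofReal (δ^P) := hT
      exact (ENNReal.ofReal_le_ofReal_iff (Real.rpow_nonneg hδ _)).mp h1
    rcases eq_or_lt_of_le hP1 with hP1' | hP1'
    · -- P = 1
      rw [← hP1'] at hsumF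
      simp only [Real.rpow_one] at hsumF
      have hexp0 : (1:ℝ) - 1/P = 0 := by rw [← hP1']; norm_num
      rw [show 1 - 1/p.toReal = (1:ℝ) - 1/P from rfl, hexp0, Real.rpow_zero, one_mul]
      exact hsumF
    · -- P > 1 : Hölder
      have hpq : P.HolderConjugate (Real.conjExponent P) :=
        Real.HolderConjugate.conjExponent hP1'
      have hHolder := Real.inner_le_Lp_mul_Lq F (fun k => |ξ k|) (fun _ => (1:ℝ)) hpq
      simp only [mul_one, abs_abs, abs_one, Real.one_rpow, Finset.sum_const, nsmul_eq_mul,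
        mul_one] at hHolder
      have hc1 : (∑ k ∈ F, |ξ k|^P)^(1/P) ≤ δ := by
        calc (∑ k ∈ F, |ξ k|^P)^(1/P) ≤ (δ^P)^(1/P) :=
              Real.rpow_le_rpow (Finset.sum_nonneg (fun k _ => Real.rpow_nonneg (abs_nonneg _) _))
                hsumF (by positivity)
          _ = δ := by
              rw [← Real.rpow_mul hδ, mul_one_div, div_self (ne_of_gt hP0), Real.rpow_one]
      have hexp : 1/(Real.conjExponent P) = 1 - 1/P := by
        have := hpq.inv_add_inv_eq_one
        rw [one_div, one_div]
        linarith
      calc ∑ k ∈ F, |ξ k| ≤ (∑ k ∈ F, |ξ k|^P)^(1/P) * (F.card:ℝ)^(1/(Real.conjExponent P)) :=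
            hHolder
        _ ≤ δ * (F.card:ℝ)^(1/(Real.conjExponent P)) := by
            apply mul_le_mul_of_nonneg_right hc1 (Real.rpow_nonneg (by positivity) _)
        _ = (F.card : ℝ)^(1 - 1/P) * δ := by rw [hexp]; ring

section TailEst

lemma wSeq_nonneg (s μ : ℝ) (f : ℝ → ℝ) (k : ℕ) : 0 ≤ wSeq s μ f k := by
  unfold wSeq
  have h1 : (0:ℝ) < max 1 (k:ℝ) := lt_of_lt_of_le one_pos (le_max_left _ _)
  positivity

lemma wsum_tail_le (s μ : ℝ) (hs : 1 ≤ s) (f : ℝ → ℝ) (hsum : Summable (wSeq s μ f))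
    (hn : wNorm s μ f ≤ 1) (N : ℕ) : ∑' j : ℕ, wSeq s μ f (j + N) ≤ 1 := by
  have hs0 : (0:ℝ) < s := lt_of_lt_of_le one_pos hs
  have htot : ∑' k, wSeq s μ f k ≤ 1 := by
    by_contra hc
    push_neg at hc
    have h1 : (1:ℝ) < (∑' k, wSeq s μ f k) ^ ((1:ℝ)/s) :=
      (Real.one_lt_rpow_iff_of_pos (lt_trans one_pos hc)).mpr (Or.inl ⟨hc, by positivity⟩)
    unfold wNorm at hn
    linarith
  have hsplit := Summable.sum_add_tsum_nat_add (f := wSeq s μ f) N hsum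
  have h2 : 0 ≤ ∑ i ∈ Finset.range N, wSeq s μ f i :=
    Finset.sum_nonneg fun i _ => wSeq_nonneg s μ f i
  linarith

lemma wSeq_eq_of_one_le (s μ : ℝ) (f : ℝ → ℝ) {k : ℕ} (hk : 1 ≤ k) :
    wSeq s μ f k = ((k:ℝ))^(s*μ) * |coef f k|^s := by
  unfold wSeq
  rw [max_eq_right (by exact_mod_cast hk : (1:ℝ) ≤ (k:ℝ))]

lemma tail_est (r : ℕ) (s μ : ℝ) (hs : 1 ≤ s) (hμ : μ > 2*(r:ℝ) - 1/s + 3/2) :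
    ∃ K : ℝ, 0 < K ∧ ∀ (f : ℝ → ℝ), Summable (wSeq s μ f) → wNorm s μ f ≤ 1 →
      ∀ N : ℕ, 1 ≤ N →
      Summable (fun j : ℕ => |coef f (j+(N+1))| * (((j+(N+1):ℕ):ℝ)+1)^(2*(r:ℝ)+1/2)) ∧
      ∑' j : ℕ, |coef f (j+(N+1))| * (((j+(N+1):ℕ):ℝ)+1)^(2*(r:ℝ)+1/2)
        ≤ K * (N:ℝ)^(-(μ - (2*(r:ℝ)+1/2) - 1 + 1/s)) := by
  set E : ℝ := 2*(r:ℝ)+1/2 with hEdef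
  have hE0 : 0 ≤ E := by positivity
  have hs0 : (0:ℝ) < s := lt_of_lt_of_le one_pos hs
  have hθ : 0 < μ - E - 1 + 1/s := by
    rw [hEdef]; linarith
  have h1s : 1/s ≤ 1 := by rw [div_le_one hs0]; exact hs
  have h1s0 : 0 < 1/s := by positivity
  rcases eq_or_lt_of_le hs with hs1 | hs1
  · -- s = 1
    refine ⟨(2:ℝ)^E, by positivity, ?_⟩
    intro f hsum hn N hN
    have hNR : (1:ℝ) ≤ (N:ℝ) := by exact_mod_cast hN
    have hterm : ∀ j : ℕ, |coef f (j+(N+1))| * (((j+(N+1):ℕ):ℝ)+1)^E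
        ≤ (2^E * (N:ℝ)^(E-μ)) * wSeq s μ f (j+(N+1)) := by
      intro j
      set k : ℕ := j + (N+1) with hkdef
      have hk1 : 1 ≤ k := by omega
      have hk0 : (0:ℝ) < (k:ℝ) := by exact_mod_cast Nat.lt_of_lt_of_le Nat.zero_lt_one hk1
      have hNk : (N:ℝ) ≤ (k:ℝ) := by
        have : N ≤ k := by omega
        exact_mod_cast this
      have h1 : ((k:ℝ)+1)^E ≤ 2^E * (k:ℝ)^E := by
        rw [← Real.mul_rpow (by norm_num) (le_of_lt hk0)]
        exact Real.rpow_le_rpow (by linarith) (by linarith) hE0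
      have h2 : ((k:ℝ))^E = (k:ℝ)^μ * (k:ℝ)^(E-μ) := by
        rw [← Real.rpow_add hk0]; ring_nf
      have h3 : ((k:ℝ))^(E-μ) ≤ (N:ℝ)^(E-μ) := by
        apply Real.rpow_le_rpow_of_nonpos (by linarith) hNk
        rw [hEdef]; linarith
      have hwk : wSeq s μ f k = (k:ℝ)^μ * |coef f k| := by
        rw [wSeq_eq_of_one_le s μ f hk1, ← hs1]
        simp [Real.rpow_one]
      calc |coef f k| * (((k:ℕ):ℝ)+1)^E ≤ |coef f k| * (2^E * (k:ℝ)^E) := by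
            apply mul_le_mul_of_nonneg_left h1 (abs_nonneg _)
        _ = 2^E * ((k:ℝ)^μ * |coef f k|) * (k:ℝ)^(E-μ) := by rw [h2]; ring
        _ ≤ 2^E * ((k:ℝ)^μ * |coef f k|) * (N:ℝ)^(E-μ) := by
            apply mul_le_mul_of_nonneg_left h3
            positivity
        _ = (2^E * (N:ℝ)^(E-μ)) * wSeq s μ f k := by rw [hwk]; ring
    have hmaj : Summable (fun j : ℕ => (2^E * (N:ℝ)^(E-μ)) * wSeq s μ f (j+(N+1))) :=
      ((summable_nat_add_iff (N+1)).mpr hsum).mul_left _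
    have hsummable : Summable (fun j : ℕ => |coef f (j+(N+1))| * (((j+(N+1):ℕ):ℝ)+1)^E) := by
      apply Summable.of_nonneg_of_le (fun j => by positivity) hterm hmaj
    refine ⟨hsummable, ?_⟩
    calc ∑' j : ℕ, |coef f (j+(N+1))| * (((j+(N+1):ℕ):ℝ)+1)^E
        ≤ ∑' j : ℕ, (2^E * (N:ℝ)^(E-μ)) * wSeq s μ f (j+(N+1)) :=
          Summable.tsum_le_tsum hterm hsummable hmaj
      _ = (2^E * (N:ℝ)^(E-μ)) * ∑' j : ℕ, wSeq s μ f (j+(N+1)) := tsum_mul_left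
      _ ≤ (2^E * (N:ℝ)^(E-μ)) * 1 := by
          apply mul_le_mul_of_nonneg_left (wsum_tail_le s μ hs f hsum hn (N+1)) (by positivity)
      _ = 2^E * (N:ℝ)^(-(μ - E - 1 + 1/s)) := by
          have hexp : E - μ = -(μ - E - 1 + 1/s) := by rw [← hs1]; norm_num
          rw [mul_one, hexp]
  · -- 1 < s
    set s' : ℝ := Real.conjExponent s with hs'def
    have hpq : s.HolderConjugate s' := Real.HolderConjugate.conjExponent hs1
    have hs'pos : 0 < s' := hpq.symm.pos
    have his' : 1/s' = 1 - 1/s := by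
      have := hpq.inv_add_inv_eq_one
      rw [one_div, one_div]; linarith
    set γ : ℝ := (μ - E) * s' with hγdef
    have hμE : 1 - 1/s < μ - E := by linarith
    have hss' : s' * (1/s') = 1 := by
      rw [mul_one_div, div_self (ne_of_gt hs'pos)]
    have hγ1 : 1 < γ := by
      have h1 : (1 - 1/s) * s' < (μ - E) * s' := by
        apply mul_lt_mul_of_pos_right hμE hs'pos
      have h2 : (1 - 1/s) * s' = 1 := by
        rw [← his', one_div, inv_mul_cancel₀ (ne_of_gt hs'pos)]
      rw [hγdef]; exact h2.symm.trans_lt h1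
    have hγgt : 0 < γ - 1 := by linarith
    refine ⟨2^E * ((γ-1)⁻¹)^(1/s'), mul_pos (by positivity)
      (Real.rpow_pos_of_pos (inv_pos.mpr hγgt) _), ?_⟩
    intro f hsum hn N hN
    have hNR : (1:ℝ) ≤ (N:ℝ) := by exact_mod_cast hN
    set F : ℕ → ℝ := fun j => ((j+(N+1):ℕ):ℝ)^μ * |coef f (j+(N+1))| with hFdef
    set G : ℕ → ℝ := fun j => (((j+(N+1):ℕ):ℝ)+1)^E * ((j+(N+1):ℕ):ℝ)^(-μ) with hGdef
    have hk0 : ∀ j : ℕ, (0:ℝ) < ((j+(N+1):ℕ):ℝ) := by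
      intro j; positivity
    have hFnn : ∀ j, 0 ≤ F j := fun j => by
      have := hk0 j; rw [hFdef]; positivity
    have hGnn : ∀ j, 0 ≤ G j := fun j => by
      have := hk0 j; rw [hGdef]; positivity
    have hFG : ∀ j : ℕ, F j * G j = |coef f (j+(N+1))| * (((j+(N+1):ℕ):ℝ)+1)^E := by
      intro j
      rw [hFdef, hGdef]
      have h1 : ((j+(N+1):ℕ):ℝ)^μ * ((j+(N+1):ℕ):ℝ)^(-μ) = 1 := by
        rw [← Real.rpow_add (hk0 j), add_neg_cancel, Real.rpow_zero]
      calc ((j+(N+1):ℕ):ℝ)^μ * |coef f (j+(N+1))| * ((((j+(N+1):ℕ):ℝ)+1)^E * ((j+(N+1):ℕ):ℝ)^(-μ))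
          = |coef f (j+(N+1))| * (((j+(N+1):ℕ):ℝ)+1)^E
            * (((j+(N+1):ℕ):ℝ)^μ * ((j+(N+1):ℕ):ℝ)^(-μ)) := by ring
        _ = _ := by rw [h1, mul_one]
    have hFs : ∀ j : ℕ, F j ^ s = wSeq s μ f (j+(N+1)) := by
      intro j
      rw [hFdef, wSeq_eq_of_one_le s μ f (by omega : 1 ≤ j+(N+1))]
      rw [Real.mul_rpow (Real.rpow_nonneg (le_of_lt (hk0 j)) _) (abs_nonneg _)]
      rw [← Real.rpow_mul (le_of_lt (hk0 j)), mul_comm μ s]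
    have hSF : Summable (fun j : ℕ => F j ^ s) := by
      have : (fun j : ℕ => F j ^ s) = fun j => wSeq s μ f (j+(N+1)) := funext hFs
      rw [this]
      exact (summable_nat_add_iff (N+1)).mpr hsum
    have hSFle : ∑' j, F j ^ s ≤ 1 := by
      have : (fun j : ℕ => F j ^ s) = fun j => wSeq s μ f (j+(N+1)) := funext hFs
      rw [this]
      exact wsum_tail_le s μ hs f hsum hn (N+1)
    have hGq : ∀ j : ℕ, G j ^ s' ≤ 2^(E*s') * (((j+(N+1):ℕ)):ℝ)^(-γ) := by
      intro j
      rw [hGdef]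
      have h0 := hk0 j
      have hk1 : (1:ℝ) ≤ ((j+(N+1):ℕ):ℝ) := by
        have : (1:ℕ) ≤ j+(N+1) := by omega
        exact_mod_cast this
      rw [Real.mul_rpow (by positivity) (Real.rpow_nonneg (le_of_lt h0) _)]
      rw [← Real.rpow_mul (le_of_lt h0)]
      have h1 : ((((j+(N+1):ℕ)):ℝ)+1)^E ≤ 2^E * (((j+(N+1):ℕ)):ℝ)^E := by
        rw [← Real.mul_rpow (by norm_num) (le_of_lt h0)]
        exact Real.rpow_le_rpow (by linarith) (by linarith) hE0
      have h2 : (((((j+(N+1):ℕ)):ℝ)+1)^E) ^ s' ≤ (2^E * (((j+(N+1):ℕ)):ℝ)^E)^s' := by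
        apply Real.rpow_le_rpow (Real.rpow_nonneg (by positivity) _) h1 (le_of_lt hs'pos)
      calc (((((j+(N+1):ℕ)):ℝ)+1)^E)^s' * (((j+(N+1):ℕ)):ℝ)^(-μ*s')
          ≤ (2^E * (((j+(N+1):ℕ)):ℝ)^E)^s' * (((j+(N+1):ℕ)):ℝ)^(-μ*s') := by
            apply mul_le_mul_of_nonneg_right h2 (Real.rpow_nonneg (le_of_lt h0) _)
        _ = 2^(E*s') * (((j+(N+1):ℕ)):ℝ)^(-γ) := by
            rw [Real.mul_rpow (by positivity) (Real.rpow_nonneg (le_of_lt h0) _),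
              ← Real.rpow_mul (by norm_num : (0:ℝ) ≤ 2),
              ← Real.rpow_mul (le_of_lt h0), mul_assoc, ← Real.rpow_add h0]
            have hexp2 : E*s' + -μ*s' = -γ := by rw [hγdef]; ring
            rw [hexp2]
    have hPS := rpow_tail_sum hγ1 hN
    have hcastj : ∀ j : ℕ, (((j+(N+1):ℕ)):ℝ)^(-γ) = ((N:ℝ)+1+(j:ℝ))^(-γ) := by
      intro j
      congr 1
      push_cast
      ring
    have hSG : Summable (fun j : ℕ => G j ^ s') := by
      apply Summable.of_nonneg_of_le (fun j => Real.rpow_nonneg (hGnn j) _) hGq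
      rw [show (fun j : ℕ => 2^(E*s') * (((j+(N+1):ℕ)):ℝ)^(-γ))
        = fun j : ℕ => 2^(E*s') * (((N:ℝ)+1+(j:ℝ))^(-γ)) by funext j; rw [hcastj j]]
      exact hPS.1.mul_left _
    have hSGle : ∑' j, G j ^ s' ≤ 2^(E*s') * ((γ-1)⁻¹ * (N:ℝ)^(1-γ)) := by
      calc ∑' j, G j ^ s' ≤ ∑' j : ℕ, 2^(E*s') * (((j+(N+1):ℕ)):ℝ)^(-γ) := by
            apply Summable.tsum_le_tsum hGq hSG
            rw [show (fun j : ℕ => 2^(E*s') * (((j+(N+1):ℕ)):ℝ)^(-γ))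
              = fun j : ℕ => 2^(E*s') * (((N:ℝ)+1+(j:ℝ))^(-γ)) by funext j; rw [hcastj j]]
            exact hPS.1.mul_left _
        _ = 2^(E*s') * ∑' j : ℕ, (((j+(N+1):ℕ)):ℝ)^(-γ) := tsum_mul_left
        _ ≤ 2^(E*s') * ((γ-1)⁻¹ * (N:ℝ)^(1-γ)) := by
            apply mul_le_mul_of_nonneg_left _ (by positivity)
            rw [show (fun j : ℕ => (((j+(N+1):ℕ)):ℝ)^(-γ))
              = fun j : ℕ => ((N:ℝ)+1+(j:ℝ))^(-γ) by funext j; rw [hcastj j]]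
            exact hPS.2
    obtain ⟨hSmul, hHold⟩ := Real.summable_and_inner_le_Lp_mul_Lq_tsum_of_nonneg hpq hFnn hGnn hSF hSG
    constructor
    · apply Summable.congr hSmul
      intro j
      exact hFG j
    · have hstep1 : ∑' j : ℕ, |coef f (j+(N+1))| * (((j+(N+1):ℕ):ℝ)+1)^E
          = ∑' j, F j * G j := by
        apply tsum_congr
        intro j
        exact (hFG j).symm
      rw [hstep1]
      have h1 : (∑' j, F j ^ s)^(1/s) ≤ 1 :=
        Real.rpow_le_one (tsum_nonneg (fun j => Real.rpow_nonneg (hFnn j) _)) hSFle (by positivity)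
      have h2 : (∑' j, G j ^ s')^(1/s') ≤ (2^(E*s') * ((γ-1)⁻¹ * (N:ℝ)^(1-γ)))^(1/s') := by
        apply Real.rpow_le_rpow (tsum_nonneg (fun j => Real.rpow_nonneg (hGnn j) _)) hSGle
          (by positivity)
      have hγ0 : (0:ℝ) < γ - 1 := by linarith
      have h3 : (2^(E*s') * ((γ-1)⁻¹ * (N:ℝ)^(1-γ)))^(1/s')
          = 2^E * ((γ-1)⁻¹)^(1/s') * (N:ℝ)^(-(μ - E - 1 + 1/s)) := by
        rw [Real.mul_rpow (by positivity) (by positivity),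
          Real.mul_rpow (by positivity) (by positivity),
          ← Real.rpow_mul (by norm_num : (0:ℝ) ≤ 2),
          ← Real.rpow_mul (by positivity : (0:ℝ) ≤ (N:ℝ))]
        have e1 : E * s' * (1/s') = E := by
          rw [mul_assoc, hss', mul_one]
        have e2 : (1-γ) * (1/s') = -(μ - E - 1 + 1/s) := by
          have h4 : γ * (1/s') = μ - E := by
            rw [hγdef, mul_assoc, hss', mul_one]
          have h5 : (1-γ)*(1/s') = 1/s' - γ*(1/s') := by ring
          rw [h5, h4, his']
          ring
        rw [e1, e2]
        ring
      calc ∑' j, F j * G j ≤ (∑' j, F j ^ s)^(1/s) * (∑' j, G j ^ s')^(1/s') := hHold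
        _ ≤ 1 * (2^(E*s') * ((γ-1)⁻¹ * (N:ℝ)^(1-γ)))^(1/s') := by
            apply mul_le_mul h1 h2 (Real.rpow_nonneg (tsum_nonneg
              (fun j => Real.rpow_nonneg (hGnn j) _)) _) one_pos.le
        _ = 2^E * ((γ-1)⁻¹)^(1/s') * (N:ℝ)^(-(μ - E - 1 + 1/s)) := by
            rw [one_mul, h3]

end TailEst

end AuxLemmas

/-- Theorem 2: for `f` in the unit ball of `W_s^μ`, `μ > 2r - 1/s + 3/2`,
`‖ξ‖_{ℓ_p} ≤ δ` and `N ≍ δ^{-1/(μ-1/p+1/s)}`: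
`‖f^{(r)} - D_N^{(r)}f^δ‖_C ≤ c δ^{(μ-2r+1/s-3/2)/(μ-1/p+1/s)}`. -/
theorem stmt_5 (r : ℕ) (hr : 1 ≤ r) (s μ : ℝ) (hs : 1 ≤ s)
    (hμ : μ > 2 * r - 1 / s + 3 / 2) (p : ℝ≥0∞) (hp : 1 ≤ p)
    (C₁ C₂ : ℝ) (hC₁ : 0 < C₁) (hC₁₂ : C₁ ≤ C₂) :
    ∃ c : ℝ, 0 < c ∧ ∀ (δ : ℝ), 0 < δ → δ < 1 → ∀ f fδ : ℝ → ℝ,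
      MemLp f 2 restr → Summable (wSeq s μ f) → wNorm s μ f ≤ 1 →
      (∀ t ∈ Set.Icc (-1:ℝ) 1,
        iteratedDeriv r f t = ∑' k : ℕ, coef f k * iteratedDeriv r (phi k) t) →
      eLpNorm (fun k : ℕ => coef f k - coef fδ k) p (Measure.count) ≤ ENNReal.ofReal δ →
      ∀ N : ℕ,
        C₁ * δ ^ (-(1 / (μ - 1 / p.toReal + 1 / s))) ≤ (N : ℝ) →
        (N : ℝ) ≤ C₂ * δ ^ (-(1 / (μ - 1 / p.toReal + 1 / s))) →
        ∀ t ∈ Set.Icc (-1:ℝ) 1,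
          |iteratedDeriv r f t - DN (coef fδ) r N t| ≤
            c * δ ^ ((μ - 2 * r + 1 / s - 3 / 2) / (μ - 1 / p.toReal + 1 / s)) := by
  have hr1 : (1:ℝ) ≤ (r:ℝ) := by exact_mod_cast hr
  have hs0 : (0:ℝ) < s := lt_of_lt_of_le one_pos hs
  have h1s : 1/s ≤ 1 := by rw [div_le_one hs0]; exact hs
  have h1s0 : 0 < 1/s := by positivity
  have hC₂ : 0 < C₂ := lt_of_lt_of_le hC₁ hC₁₂
  set E : ℝ := 2*(r:ℝ)+1/2 with hEdef
  have hE0 : (0:ℝ) ≤ E := by positivity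
  set ip : ℝ := 1/p.toReal with hipdef
  have hip0 : 0 ≤ ip := by positivity
  have hip1 : ip ≤ 1 := by
    by_cases hptop : p = ⊤
    · rw [hipdef, hptop]; simp
    · have h1 : 1 ≤ p.toReal := by
        rw [← ENNReal.toReal_one]; exact ENNReal.toReal_mono hptop hp
      rw [hipdef, div_le_one (by linarith)]; exact h1
  set d : ℝ := μ - ip + 1/s with hddef
  have hθ0 : 0 < μ - E - 1 + 1/s := by rw [hEdef]; linarith
  set θ : ℝ := μ - E - 1 + 1/s with hθdef
  have hd0 : 0 < d := by
    have : d = θ + E + 1 - ip := by rw [hθdef, hddef]; ring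
    rw [this]; linarith
  set q : ℝ := E + 1 - ip with hqdef
  have hq0 : 0 ≤ q := by rw [hqdef]; linarith
  obtain ⟨Kt, hKt0, hKt⟩ := tail_est r s μ hs hμ
  refine ⟨(2*C₂)^q + Kt * C₁^(-θ),
    add_pos (Real.rpow_pos_of_pos (by linarith) _)
      (mul_pos hKt0 (Real.rpow_pos_of_pos hC₁ _)), ?_⟩
  intro δ hδ0 hδ1 f fδ hmem hsum hnorm hrep hnoise N hN1 hN2 t ht
  have hδβ0 : 0 < δ ^ (-(1/d)) := Real.rpow_pos_of_pos hδ0 _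
  have hN0 : 0 < N := by
    rcases Nat.eq_zero_or_pos N with h0 | h0
    · exfalso
      rw [h0] at hN1
      simp only [Nat.cast_zero] at hN1
      nlinarith [mul_pos hC₁ hδβ0]
    · exact h0
  have hNR1 : (1:ℝ) ≤ (N:ℝ) := by exact_mod_cast hN0
  obtain ⟨hTsummable, hTle⟩ := hKt f hsum hnorm N hN0
  have hψb : ∀ k : ℕ, |iteratedDeriv r (phi k) t| ≤ ((k:ℝ)+1)^E :=
    fun k => psi_bound k r ht
  have hterm_le : ∀ j : ℕ, |coef f (j+(N+1)) * iteratedDeriv r (phi (j+(N+1))) t|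
      ≤ |coef f (j+(N+1))| * (((j+(N+1):ℕ):ℝ)+1)^E := by
    intro j
    rw [abs_mul]
    exact mul_le_mul_of_nonneg_left (hψb _) (abs_nonneg _)
  have hsum_shift : Summable (fun j : ℕ => coef f (j+(N+1)) * iteratedDeriv r (phi (j+(N+1))) t) := by
    apply Summable.of_norm_bounded hTsummable
    intro j
    rw [Real.norm_eq_abs]
    exact hterm_le j
  have hsummable : Summable (fun k : ℕ => coef f k * iteratedDeriv r (phi k) t) :=
    (summable_nat_add_iff (N+1)).mp hsum_shift
  have hsplit := Summable.sum_add_tsum_nat_add (f := fun k => coef f k * iteratedDeriv r (phi k) t)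
    (N+1) hsummable
  have hrept := hrep t ht
  have hhead : ∑ i ∈ Finset.range (N+1), coef f i * iteratedDeriv r (phi i) t
      = ∑ k ∈ Finset.Icc r N, coef f k * iteratedDeriv r (phi k) t := by
    symm
    apply Finset.sum_subset
    · intro k hk
      simp only [Finset.mem_Icc] at hk
      simp only [Finset.mem_range]
      omega
    · intro k hk hnk
      simp only [Finset.mem_range] at hk
      simp only [Finset.mem_Icc, not_and, not_le] at hnk
      have hkr : k < r := by omega
      rw [psi_zero hkr t, mul_zero]
  have herr : iteratedDeriv r f t - DN (coef fδ) r N t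
      = (∑ k ∈ Finset.Icc r N, (coef f k - coef fδ k) * iteratedDeriv r (phi k) t)
        + ∑' j : ℕ, coef f (j+(N+1)) * iteratedDeriv r (phi (j+(N+1))) t := by
    rw [hrept]
    unfold DN
    rw [← hsplit, hhead]
    have hsub : ∑ k ∈ Finset.Icc r N, (coef f k - coef fδ k) * iteratedDeriv r (phi k) t
        = (∑ k ∈ Finset.Icc r N, coef f k * iteratedDeriv r (phi k) t)
          - ∑ k ∈ Finset.Icc r N, coef fδ k * iteratedDeriv r (phi k) t := by
      rw [← Finset.sum_sub_distrib]
      apply Finset.sum_congr rfl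
      intro k _
      ring
    rw [hsub]
    ring
  -- noise bound
  have hnoiseB : |∑ k ∈ Finset.Icc r N, (coef f k - coef fδ k) * iteratedDeriv r (phi k) t|
      ≤ ((N:ℝ)+1)^(E+(1-ip)) * δ := by
    have hNp1 : (0:ℝ) < (N:ℝ)+1 := by positivity
    calc |∑ k ∈ Finset.Icc r N, (coef f k - coef fδ k) * iteratedDeriv r (phi k) t|
        ≤ ∑ k ∈ Finset.Icc r N, |(coef f k - coef fδ k) * iteratedDeriv r (phi k) t| :=
          Finset.abs_sum_le_sum_abs _ _
      _ ≤ ∑ k ∈ Finset.Icc r N, |coef f k - coef fδ k| * ((N:ℝ)+1)^E := by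
          apply Finset.sum_le_sum
          intro k hk
          simp only [Finset.mem_Icc] at hk
          rw [abs_mul]
          have h1 : |iteratedDeriv r (phi k) t| ≤ ((N:ℝ)+1)^E := by
            refine le_trans (hψb k) (Real.rpow_le_rpow (by positivity) ?_ hE0)
            have : (k:ℝ) ≤ (N:ℝ) := by exact_mod_cast hk.2
            linarith
          exact mul_le_mul_of_nonneg_left h1 (abs_nonneg _)
      _ = ((N:ℝ)+1)^E * ∑ k ∈ Finset.Icc r N, |coef f k - coef fδ k| := by
          rw [Finset.mul_sum]
          apply Finset.sum_congr rfl
          intro k _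
          ring
      _ ≤ ((N:ℝ)+1)^E * (((Finset.Icc r N).card : ℝ)^(1-ip) * δ) := by
          apply mul_le_mul_of_nonneg_left _ (Real.rpow_nonneg (by positivity) _)
          exact noise_sum_bound p hp (fun k => coef f k - coef fδ k) (le_of_lt hδ0)
            hnoise (Finset.Icc r N)
      _ ≤ ((N:ℝ)+1)^E * (((N:ℝ)+1)^(1-ip) * δ) := by
          apply mul_le_mul_of_nonneg_left _ (Real.rpow_nonneg (by positivity) _)
          apply mul_le_mul_of_nonneg_right _ (le_of_lt hδ0)
          apply Real.rpow_le_rpow (by positivity) _ (by linarith)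
          have hcard : (Finset.Icc r N).card ≤ N+1 := by
            rw [Nat.card_Icc]; omega
          calc ((Finset.Icc r N).card : ℝ) ≤ ((N+1 : ℕ):ℝ) := by exact_mod_cast hcard
            _ = (N:ℝ)+1 := by push_cast; ring
      _ = ((N:ℝ)+1)^(E+(1-ip)) * δ := by
          have hh : ((N:ℝ)+1)^(E+(1-ip)) = ((N:ℝ)+1)^E * ((N:ℝ)+1)^(1-ip) :=
            Real.rpow_add hNp1 _ _
          rw [hh, mul_assoc]
  -- tail bound
  have habs_tail : |∑' j : ℕ, coef f (j+(N+1)) * iteratedDeriv r (phi (j+(N+1))) t|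
      ≤ Kt * (N:ℝ)^(-θ) := by
    have hsumabs : Summable (fun j : ℕ =>
        |coef f (j+(N+1)) * iteratedDeriv r (phi (j+(N+1))) t|) := by
      apply Summable.of_nonneg_of_le (fun j => abs_nonneg _) hterm_le hTsummable
    calc |∑' j : ℕ, coef f (j+(N+1)) * iteratedDeriv r (phi (j+(N+1))) t|
        ≤ ∑' j : ℕ, |coef f (j+(N+1)) * iteratedDeriv r (phi (j+(N+1))) t| := by
          have := norm_tsum_le_tsum_norm (f := fun j : ℕ =>
            coef f (j+(N+1)) * iteratedDeriv r (phi (j+(N+1))) t) (by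
              simpa only [Real.norm_eq_abs] using hsumabs)
          simpa only [Real.norm_eq_abs] using this
      _ ≤ ∑' j : ℕ, |coef f (j+(N+1))| * (((j+(N+1):ℕ):ℝ)+1)^E :=
          Summable.tsum_le_tsum hterm_le hsumabs hTsummable
      _ ≤ Kt * (N:ℝ)^(-θ) := hTle
  -- convert N powers to δ powers
  have htarg : (μ - 2*(r:ℝ) + 1/s - 3/2) / (μ - 1/p.toReal + 1/s) = θ/d := by
    rw [hθdef, hddef, hipdef, hEdef]
    ring_nf
  have hNup : (N:ℝ)+1 ≤ 2*C₂ * δ^(-(1/d)) := by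
    have h2 : (N:ℝ)+1 ≤ 2*(N:ℝ) := by linarith
    have h3 : (N:ℝ) ≤ C₂ * δ^(-(1/(μ - 1/p.toReal + 1/s))) := hN2
    have h4 : (1:ℝ)/(μ - 1/p.toReal + 1/s) = 1/d := by rw [hddef, hipdef]
    rw [h4] at h3
    linarith
  have hfin1 : ((N:ℝ)+1)^(E+(1-ip)) * δ ≤ (2*C₂)^q * δ^(θ/d) := by
    have hbase : (0:ℝ) < 2*C₂ * δ^(-(1/d)) := by positivity
    have h1 : ((N:ℝ)+1)^(E+(1-ip)) ≤ (2*C₂ * δ^(-(1/d)))^q := by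
      rw [show E+(1-ip) = q by rw [hqdef]; ring]
      exact Real.rpow_le_rpow (by positivity) hNup hq0
    have h2 : (2*C₂ * δ^(-(1/d)))^q = (2*C₂)^q * δ^(-(q/d)) := by
      rw [Real.mul_rpow (by linarith) (le_of_lt hδβ0),
        ← Real.rpow_mul (le_of_lt hδ0)]
      congr 1
      ring
    have h3 : (2*C₂)^q * δ^(-(q/d)) * δ = (2*C₂)^q * δ^(1-q/d) := by
      rw [mul_assoc]
      congr 1
      rw [show δ^(1-q/d) = δ^(-(q/d)+1) by congr 1; ring,
        Real.rpow_add hδ0, Real.rpow_one]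
    have h4 : 1 - q/d = θ/d := by
      field_simp
      rw [hqdef, hθdef, hddef, hEdef]
      ring
    calc ((N:ℝ)+1)^(E+(1-ip)) * δ ≤ (2*C₂ * δ^(-(1/d)))^q * δ := by
          apply mul_le_mul_of_nonneg_right h1 (le_of_lt hδ0)
      _ = (2*C₂)^q * δ^(1-q/d) := by rw [h2, h3]
      _ = (2*C₂)^q * δ^(θ/d) := by rw [h4]
  have hfin2 : Kt * (N:ℝ)^(-θ) ≤ Kt * C₁^(-θ) * δ^(θ/d) := by
    have hlow : 0 < C₁ * δ^(-(1/d)) := mul_pos hC₁ hδβ0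
    have h3 : C₁ * δ^(-(1/(μ - 1/p.toReal + 1/s))) ≤ (N:ℝ) := hN1
    have h4 : (1:ℝ)/(μ - 1/p.toReal + 1/s) = 1/d := by rw [hddef, hipdef]
    rw [h4] at h3
    have h1 : (N:ℝ)^(-θ) ≤ (C₁ * δ^(-(1/d)))^(-θ) :=
      Real.rpow_le_rpow_of_nonpos hlow h3 (by linarith)
    have h2 : (C₁ * δ^(-(1/d)))^(-θ) = C₁^(-θ) * δ^(θ/d) := by
      rw [Real.mul_rpow (le_of_lt hC₁) (le_of_lt hδβ0),
        ← Real.rpow_mul (le_of_lt hδ0)]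
      congr 1
      ring
    calc Kt * (N:ℝ)^(-θ) ≤ Kt * (C₁ * δ^(-(1/d)))^(-θ) := by
          apply mul_le_mul_of_nonneg_left h1 (le_of_lt hKt0)
      _ = Kt * C₁^(-θ) * δ^(θ/d) := by rw [h2]; ring
  -- combine
  rw [htarg, herr]
  calc |(∑ k ∈ Finset.Icc r N, (coef f k - coef fδ k) * iteratedDeriv r (phi k) t)
        + ∑' j : ℕ, coef f (j+(N+1)) * iteratedDeriv r (phi (j+(N+1))) t|
      ≤ |∑ k ∈ Finset.Icc r N, (coef f k - coef fδ k) * iteratedDeriv r (phi k) t|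
        + |∑' j : ℕ, coef f (j+(N+1)) * iteratedDeriv r (phi (j+(N+1))) t| := abs_add_le _ _
    _ ≤ ((N:ℝ)+1)^(E+(1-ip)) * δ + Kt * (N:ℝ)^(-θ) := add_le_add hnoiseB habs_tail
    _ ≤ (2*C₂)^q * δ^(θ/d) + Kt * C₁^(-θ) * δ^(θ/d) := add_le_add hfin1 hfin2
    _ = ((2*C₂)^q + Kt * C₁^(-θ)) * δ^(θ/d) := by ring
end

section
/- Let r ≥ 2 and for integers 0 ≤ l_r and k ≥ l_r + r define B_k^r = Σ*_{l_1=l_r+r−1}^{k−1} (l_1+1/2) Σ*_{l_2=l_r+r−2}^{l_1−1} (l_2+1/2) ⋯ Σ*_{l_{r−1}=l_r+1}^{l_{r−2}−1} (l_{r−1}+1/2), where each Σ* sums only over indices of appropriate parity (each consecutive pair summed over indices of opposite parity to its bound). Then there exist constants c_1, c_2 > 0 depending only on r such that c_1 · k^{2r−2} ≤ B_k^r ≤ c_2 · k^{2r−2} for all k ≥ l_r + r (with l_r fixed, say l_r = 0). -/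
open MeasureTheory Set ENNReal

/-- Iterated parity-restricted sum `B_k^r` with base index `l`:
`B_k^1 = 1` and `B_k^{m+2} = Σ*_{j = l+m+1}^{k-1} (j+1/2) · B_j^{m+1}`,
where the star restricts to `j` with `j + k` odd. -/
noncomputable def B (l : ℕ) : ℕ → ℕ → ℝ
  | 0, _ => 1
  | 1, _ => 1
  | (m+2), k =>
      ∑ j ∈ (Finset.Icc (l + m + 1) (k - 1)).filter (fun j => Odd (j + k)),
        ((j : ℝ) + 1/2) * B l (m+1) j


lemma B_two (m k : ℕ) : B 0 (m+2) k =
    ∑ j ∈ (Finset.Icc (m + 1) (k - 1)).filter (fun j => Odd (j + k)),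
        ((j : ℝ) + 1/2) * B 0 (m+1) j := by
  rw [B]; norm_num

lemma B_one (k : ℕ) : B 0 1 k = 1 := by rw [B]

lemma B_pos : ∀ (m k : ℕ), m + 1 ≤ k → 0 < B 0 (m+1) k := by
  intro m
  induction m with
  | zero => intro k _; rw [B_one]; norm_num
  | succ m ih =>
    intro k hk
    rw [B_two]
    apply Finset.sum_pos'
    · intro j hj
      simp only [Finset.mem_filter, Finset.mem_Icc] at hj
      exact le_of_lt (mul_pos (by positivity) (ih j hj.1.1))
    · refine ⟨k - 1, ?_, ?_⟩
      · simp only [Finset.mem_filter, Finset.mem_Icc]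
        exact ⟨⟨by omega, le_rfl⟩, ⟨k - 1, by omega⟩⟩
      · exact mul_pos (by positivity) (ih (k-1) (by omega))

lemma B_bound : ∀ m : ℕ, ∃ c₁ c₂ : ℝ, 0 < c₁ ∧ 0 < c₂ ∧ ∀ k : ℕ, m + 1 ≤ k →
    c₁ * (k:ℝ)^(2*m) ≤ B 0 (m+1) k ∧ B 0 (m+1) k ≤ c₂ * (k:ℝ)^(2*m) := by
  intro m
  induction m with
  | zero =>
    exact ⟨1, 1, one_pos, one_pos, fun k _ => by rw [B_one]; norm_num⟩
  | succ m ih =>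
    obtain ⟨c₁, c₂, hc₁, hc₂, h⟩ := ih
    have hP : (0:ℝ) < (2*(m:ℝ)+1)^(2*m+2) := by positivity
    have hP1 : (1:ℝ) ≤ (2*(m:ℝ)+1)^(2*m+2) := one_le_pow₀ (by linarith [Nat.cast_nonneg (α := ℝ) m])
    have hA : (0:ℝ) < 8 * 2^(2*m+1) := by positivity
    refine ⟨c₁ / (8 * 2^(2*m+1) * (2*(m:ℝ)+1)^(2*m+2)), 2*c₂, by positivity, by positivity, ?_⟩
    intro k hk
    have hkR : (1:ℝ) ≤ (k:ℝ) := by exact_mod_cast (by omega : 1 ≤ k)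
    have he : 2*(m+1) = 2*m+2 := by ring
    rw [he]
    constructor
    · -- lower bound
      rw [B_two]
      rcases le_or_gt k (2*m+1) with hsm | hlg
      · -- small k : single term j = k-1
        have hmem : k - 1 ∈ (Finset.Icc (m + 1) (k - 1)).filter (fun j => Odd (j + k)) := by
          simp only [Finset.mem_filter, Finset.mem_Icc]
          exact ⟨⟨by omega, le_rfl⟩, ⟨k - 1, by omega⟩⟩
        have hterm : c₁ ≤ (((k-1:ℕ):ℝ) + 1/2) * B 0 (m+1) (k-1) := by
          have hB := (h (k-1) (by omega)).1
          have h1 : (1:ℝ) ≤ ((k-1:ℕ):ℝ) := by exact_mod_cast (by omega : 1 ≤ k - 1)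
          have hpow : (1:ℝ) ≤ ((k-1:ℕ):ℝ)^(2*m) := one_le_pow₀ h1
          have hB0 : (0:ℝ) ≤ B 0 (m+1) (k-1) := le_trans (by positivity) hB
          calc c₁ = c₁ * 1 := by ring
            _ ≤ c₁ * ((k-1:ℕ):ℝ)^(2*m) := by
                apply mul_le_mul_of_nonneg_left hpow hc₁.le
            _ ≤ B 0 (m+1) (k-1) := hB
            _ = 1 * B 0 (m+1) (k-1) := by ring
            _ ≤ (((k-1:ℕ):ℝ) + 1/2) * B 0 (m+1) (k-1) := by
                apply mul_le_mul_of_nonneg_right (by linarith) hB0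
        have hsum : (((k-1:ℕ):ℝ) + 1/2) * B 0 (m+1) (k-1) ≤
            ∑ j ∈ (Finset.Icc (m + 1) (k - 1)).filter (fun j => Odd (j + k)),
              ((j : ℝ) + 1/2) * B 0 (m+1) j := by
          apply Finset.single_le_sum (f := fun j : ℕ => ((j : ℝ) + 1/2) * B 0 (m+1) j) _ hmem
          intro j hj
          simp only [Finset.mem_filter, Finset.mem_Icc] at hj
          exact le_of_lt (mul_pos (by positivity) (B_pos m j hj.1.1))
        have hkP : ((k:ℝ))^(2*m+2) ≤ (2*(m:ℝ)+1)^(2*m+2) := by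
          apply pow_le_pow_left₀ (by positivity)
          have : (k:ℝ) ≤ 2*(m:ℝ)+1 := by exact_mod_cast hsm
          linarith
        have hc : c₁ / (8 * 2^(2*m+1) * (2*(m:ℝ)+1)^(2*m+2)) * (2*(m:ℝ)+1)^(2*m+2) ≤ c₁ := by
          rw [div_mul_eq_mul_div, mul_comm (8 * 2^(2*m+1)) _, ← div_div, mul_div_assoc,
            div_self (ne_of_gt hP), mul_one]
          exact div_le_self hc₁.le
            (by have h2 : (1:ℝ) ≤ 2^(2*m+1) := one_le_pow₀ one_le_two; linarith)
        calc c₁ / (8 * 2^(2*m+1) * (2*(m:ℝ)+1)^(2*m+2)) * (k:ℝ)^(2*m+2)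
            ≤ c₁ / (8 * 2^(2*m+1) * (2*(m:ℝ)+1)^(2*m+2)) * (2*(m:ℝ)+1)^(2*m+2) := by
              apply mul_le_mul_of_nonneg_left hkP (by positivity)
          _ ≤ c₁ := hc
          _ ≤ _ := le_trans hterm hsum
      · -- large k : many terms
        set n := (k+2)/4 with hn
        have hn1 : 4*n ≤ k + 2 := by omega
        have hn2 : k + 2 < 4*n + 4 := by omega
        have hsub : ∀ i ∈ Finset.range n, (k-1-2*i) ∈
            (Finset.Icc (m + 1) (k - 1)).filter (fun j => Odd (j + k)) := by
          intro i hi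
          simp only [Finset.mem_range] at hi
          simp only [Finset.mem_filter, Finset.mem_Icc]
          exact ⟨⟨by omega, by omega⟩, ⟨k - 1 - i, by omega⟩⟩
        have hinj : Set.InjOn (fun i => k-1-2*i) (Finset.range n) := by
          intro a ha b hb hab
          simp only [Finset.coe_range, Set.mem_Iio] at ha hb
          simp only at hab
          omega
        have himg : ∑ i ∈ Finset.range n, ((((k-1-2*i:ℕ)) : ℝ) + 1/2) * B 0 (m+1) (k-1-2*i)
            ≤ ∑ j ∈ (Finset.Icc (m + 1) (k - 1)).filter (fun j => Odd (j + k)),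
              ((j : ℝ) + 1/2) * B 0 (m+1) j := by
          have heq : ∑ j ∈ (Finset.range n).image (fun i => k-1-2*i),
              (((j:ℕ):ℝ) + 1/2) * B 0 (m+1) j
              = ∑ i ∈ Finset.range n, ((((k-1-2*i:ℕ)):ℝ) + 1/2) * B 0 (m+1) (k-1-2*i) :=
            Finset.sum_image (fun a ha b hb hab => by
              simp only [Finset.mem_range, Finset.coe_range, Set.mem_Iio] at ha hb hab; omega)
          rw [← heq]
          apply Finset.sum_le_sum_of_subset_of_nonneg
          · exact Finset.image_subset_iff.mpr hsub
          · intro j hj _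
            simp only [Finset.mem_filter, Finset.mem_Icc] at hj
            exact le_of_lt (mul_pos (by positivity) (B_pos m j hj.1.1))
        have hlow : ∀ i ∈ Finset.range n,
            c₁ * ((k:ℝ)/2)^(2*m+1) ≤ ((((k-1-2*i:ℕ)) : ℝ) + 1/2) * B 0 (m+1) (k-1-2*i) := by
          intro i hi
          simp only [Finset.mem_range] at hi
          set j := k-1-2*i with hj
          have hjk : k ≤ 2*j := by omega
          have hjm : m + 1 ≤ j := by omega
          have hjR : (k:ℝ)/2 ≤ (j:ℝ) := by
            have : (k:ℝ) ≤ 2*(j:ℝ) := by exact_mod_cast hjk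
            linarith
          have hpow : ((k:ℝ)/2)^(2*m) ≤ (j:ℝ)^(2*m) := pow_le_pow_left₀ (by positivity) hjR _
          have hBj := (h j hjm).1
          calc c₁ * ((k:ℝ)/2)^(2*m+1) = ((k:ℝ)/2) * (c₁ * ((k:ℝ)/2)^(2*m)) := by ring
            _ ≤ ((j:ℝ)+1/2) * (c₁ * ((k:ℝ)/2)^(2*m)) := by
                apply mul_le_mul_of_nonneg_right (by linarith) (by positivity)
            _ ≤ ((j:ℝ)+1/2) * (c₁ * (j:ℝ)^(2*m)) := by
                apply mul_le_mul_of_nonneg_left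
                  (mul_le_mul_of_nonneg_left hpow hc₁.le) (by positivity)
            _ ≤ ((j:ℝ)+1/2) * B 0 (m+1) j := by
                apply mul_le_mul_of_nonneg_left hBj (by positivity)
        have hcard : (n:ℝ) * (c₁ * ((k:ℝ)/2)^(2*m+1)) ≤
            ∑ i ∈ Finset.range n, ((((k-1-2*i:ℕ)) : ℝ) + 1/2) * B 0 (m+1) (k-1-2*i) := by
          have := Finset.card_nsmul_le_sum (Finset.range n) _ _ hlow
          simpa [nsmul_eq_mul, Finset.card_range] using this
        have hn8 : (k:ℝ)/8 ≤ (n:ℝ) := by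
          have : k ≤ 8*n := by omega
          have : (k:ℝ) ≤ 8*(n:ℝ) := by exact_mod_cast this
          linarith
        have hstart : c₁ / (8 * 2^(2*m+1) * (2*(m:ℝ)+1)^(2*m+2)) * (k:ℝ)^(2*m+2)
            ≤ (n:ℝ) * (c₁ * ((k:ℝ)/2)^(2*m+1)) := by
          have step1 : c₁ / (8 * 2^(2*m+1) * (2*(m:ℝ)+1)^(2*m+2)) * (k:ℝ)^(2*m+2)
              ≤ c₁ / (8 * 2^(2*m+1)) * (k:ℝ)^(2*m+2) := by
            apply mul_le_mul_of_nonneg_right _ (by positivity)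
            apply div_le_div_of_nonneg_left hc₁.le hA
            nlinarith
          have step2 : c₁ / (8 * 2^(2*m+1)) * (k:ℝ)^(2*m+2)
              = ((k:ℝ)/8) * (c₁ * ((k:ℝ)/2)^(2*m+1)) := by
            rw [div_pow]
            field_simp
            ring
          have step3 : ((k:ℝ)/8) * (c₁ * ((k:ℝ)/2)^(2*m+1)) ≤ (n:ℝ) * (c₁ * ((k:ℝ)/2)^(2*m+1)) := by
            apply mul_le_mul_of_nonneg_right hn8 (by positivity)
          linarith
        linarith
    · -- upper bound
      rw [B_two]
      have hbnd : ∀ j ∈ Finset.Icc (m+1) (k-1),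
          ((j : ℝ) + 1/2) * B 0 (m+1) j ≤ 2*(k:ℝ) * (c₂ * (k:ℝ)^(2*m)) := by
        intro j hj
        simp only [Finset.mem_Icc] at hj
        have hj1 : (j:ℝ) ≤ (k:ℝ) := by exact_mod_cast (by omega : j ≤ k)
        have hB := (h j hj.1).2
        have hBpos := (B_pos m j hj.1).le
        have hpow : (j:ℝ)^(2*m) ≤ (k:ℝ)^(2*m) := pow_le_pow_left₀ (by positivity) hj1 _
        calc ((j : ℝ) + 1/2) * B 0 (m+1) j ≤ ((j : ℝ) + 1/2) * (c₂ * (j:ℝ)^(2*m)) := by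
              apply mul_le_mul_of_nonneg_left hB (by positivity)
          _ ≤ 2*(k:ℝ) * (c₂ * (k:ℝ)^(2*m)) := by
              apply mul_le_mul (by linarith) (mul_le_mul_of_nonneg_left hpow hc₂.le)
                (by positivity) (by positivity)
      calc ∑ j ∈ (Finset.Icc (m + 1) (k - 1)).filter (fun j => Odd (j + k)),
              ((j : ℝ) + 1/2) * B 0 (m+1) j
          ≤ ∑ j ∈ Finset.Icc (m+1) (k-1), ((j : ℝ) + 1/2) * B 0 (m+1) j := by
            apply Finset.sum_le_sum_of_subset_of_nonneg (Finset.filter_subset _ _)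
            intro j hj _
            simp only [Finset.mem_Icc] at hj
            exact le_of_lt (mul_pos (by positivity) (B_pos m j hj.1))
        _ ≤ ((Finset.Icc (m+1) (k-1)).card : ℝ) * (2*(k:ℝ) * (c₂ * (k:ℝ)^(2*m))) := by
            have := Finset.sum_le_card_nsmul (Finset.Icc (m+1) (k-1)) _ _ hbnd
            simpa [nsmul_eq_mul] using this
        _ ≤ (k:ℝ) * (2*(k:ℝ) * (c₂ * (k:ℝ)^(2*m))) := by
            apply mul_le_mul_of_nonneg_right _ (by positivity)
            rw [Nat.card_Icc]
            exact_mod_cast (by omega : (k-1) + 1 - (m+1) ≤ k)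
        _ = 2*c₂ * (k:ℝ)^(2*m+2) := by ring

/-- two-sided growth estimate `B_k^r ≍ k^{2r-2}` for `r ≥ 2`, base `l_r = 0`. -/
theorem stmt_6 (r : ℕ) (hr : 2 ≤ r) :
    ∃ c₁ c₂ : ℝ, 0 < c₁ ∧ 0 < c₂ ∧ ∀ k : ℕ, r ≤ k →
      c₁ * (k : ℝ) ^ (2 * r - 2 : ℝ) ≤ B 0 r k ∧
      B 0 r k ≤ c₂ * (k : ℝ) ^ (2 * r - 2 : ℝ) := by
  obtain ⟨c₁, c₂, hc₁, hc₂, h⟩ := B_bound (r - 1)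
  refine ⟨c₁, c₂, hc₁, hc₂, fun k hk => ?_⟩
  have hr1 : r - 1 + 1 = r := by omega
  have hthis := h k (by omega)
  rw [hr1] at hthis
  have hexp : (k : ℝ) ^ (2 * (r:ℝ) - 2 : ℝ) = (k:ℝ) ^ (2 * (r - 1)) := by
    rw [← Real.rpow_natCast (k:ℝ) (2 * (r - 1))]
    congr 1
    rw [Nat.cast_mul, Nat.cast_sub (by omega : 1 ≤ r)]
    push_cast
    ring
  rw [hexp]
  exact hthis
end

section
/- Let r ≥ 1, 1 ≤ p ≤ ∞, and suppose ξ_k = ⟨f − f^δ, φ_k⟩ satisfies ‖ξ‖_{ℓ_p} ≤ δ with 0 < δ < 1. Then there is a constant c such that for all N ≥ r, ‖D_N^{(r)} f − D_N^{(r)} f^δ‖_{L²[-1,1]} ≤ c · δ · N^{2r − 1/p + 1/2}. -/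
open MeasureTheory Set ENNReal

open Polynomial

noncomputable def UP (k : ℕ) : ℝ[X] := ((X - C 1) * (X - C (-1))) ^ k

noncomputable def ck (k : ℕ) : ℝ :=
  Real.sqrt ((k : ℝ) + 1/2) * ((2:ℝ)^k * (Nat.factorial k : ℝ))⁻¹

def vB (k a : ℕ) : ℕ := a.choose k * k.factorial * (k.descFactorial (a - k) * 2 ^ (k - (a - k)))

lemma iteratedDeriv_polyEval (p : ℝ[X]) (n : ℕ) :
    iteratedDeriv n (fun t => p.eval t) = fun t => (derivative^[n] p).eval t := by
  induction n with
  | zero => simp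
  | succ n ih =>
    rw [iteratedDeriv_succ, ih, Function.iterate_succ_apply']
    funext t
    exact Polynomial.deriv _

lemma eval_iter_deriv_mul (P Q : ℝ[X]) (a : ℕ) (x : ℝ) :
    (derivative^[a] (P * Q)).eval x
      = ∑ i ∈ Finset.range (a + 1),
          (a.choose i : ℝ) * ((derivative^[a - i] P).eval x * (derivative^[i] Q).eval x) := by
  rw [Polynomial.iterate_derivative_mul]
  rw [Polynomial.eval_finset_sum]
  refine Finset.sum_congr rfl fun i hi => ?_
  simp [mul_assoc]

lemma eval_iter_deriv_X_sub_pow (c : ℝ) (k j : ℕ) (x : ℝ) :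
    (derivative^[j] ((X - C c) ^ k)).eval x = (k.descFactorial j : ℝ) * (x - c) ^ (k - j) := by
  rw [Polynomial.iterate_derivative_X_sub_pow]
  simp

lemma key_abs_eval (c d : ℝ) (hcd : |c - d| = 2) (k a : ℕ) :
    |(derivative^[a] (((X - C d) * (X - C c)) ^ k)).eval c| ≤ (vB k a : ℝ) := by
  rw [mul_pow, eval_iter_deriv_mul]
  have hsingle : ∑ i ∈ Finset.range (a + 1),
      (a.choose i : ℝ) * ((derivative^[a - i] ((X - C d)^k)).eval c *
        (derivative^[i] ((X - C c)^k)).eval c)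
      = (a.choose k : ℝ) * ((derivative^[a - k] ((X - C d)^k)).eval c *
        (derivative^[k] ((X - C c)^k)).eval c) := by
    apply Finset.sum_eq_single
    · intro b _ hbk
      rw [eval_iter_deriv_X_sub_pow c k b, sub_self]
      rcases lt_or_lt_iff_ne.2 hbk with h | h
      · rw [zero_pow (by omega)]
        ring
      · rw [Nat.descFactorial_eq_zero_iff_lt.2 h]
        push_cast; ring
    · intro hk
      have : a < k := by
        simp only [Finset.mem_range] at hk; omega
      rw [Nat.choose_eq_zero_of_lt this]
      push_cast; ring
  rw [hsingle, eval_iter_deriv_X_sub_pow, eval_iter_deriv_X_sub_pow, Nat.descFactorial_self,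
    sub_self]
  by_cases hka : k ≤ a
  · have h0 : (0:ℝ) ^ (k - k) = 1 := by simp
    rw [h0, mul_one, abs_mul, abs_mul, abs_mul, abs_pow, hcd, Nat.abs_cast, Nat.abs_cast,
      Nat.abs_cast]
    unfold vB
    push_cast
    apply le_of_eq
    ring
  · push_neg at hka
    rw [Nat.choose_eq_zero_of_lt hka]
    simp [vB, Nat.choose_eq_zero_of_lt hka]

lemma vB_le (k a : ℕ) (hka : k ≤ a) (h2k : a ≤ 2 * k) :
    vB k a ≤ k.factorial * (2 * k) ^ (2 * (a - k)) * 2 ^ (2 * k - a) := by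
  unfold vB
  have h1 : a.choose k ≤ (2 * k) ^ (a - k) := by
    rw [← Nat.choose_symm hka]
    exact le_trans (Nat.choose_le_pow a (a - k)) (Nat.pow_le_pow_left (by omega) _)
  have h2 : k.descFactorial (a - k) ≤ (2 * k) ^ (a - k) :=
    le_trans (Nat.descFactorial_le_pow k (a - k)) (Nat.pow_le_pow_left (by omega) _)
  have h3 : k - (a - k) = 2 * k - a := by omega
  calc a.choose k * k.factorial * (k.descFactorial (a - k) * 2 ^ (k - (a - k)))
      ≤ (2*k)^(a-k) * k.factorial * ((2*k)^(a-k) * 2 ^ (k - (a - k))) := by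
        exact Nat.mul_le_mul (Nat.mul_le_mul h1 le_rfl) (Nat.mul_le_mul h2 le_rfl)
    _ = k.factorial * (2 * k) ^ (2 * (a - k)) * 2 ^ (2 * k - a) := by
        rw [h3, two_mul (a - k), pow_add]; ring

lemma vB_prod_le (k r i : ℕ) (hr : 1 ≤ r) (hrk : r ≤ k) (hi : i < r) :
    vB k (k + r + i) * vB k (k + r - 1 - i)
      ≤ 4 ^ k * (k.factorial) ^ 2 * (2 * k) ^ (4 * r - 2) := by
  by_cases h2k : k + r + i ≤ 2 * k
  · have b1 := vB_le k (k + r + i) (by omega) h2k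
    have b2 := vB_le k (k + r - 1 - i) (by omega) (by omega)
    calc vB k (k + r + i) * vB k (k + r - 1 - i)
        ≤ (k.factorial * (2 * k) ^ (2 * (k + r + i - k)) * 2 ^ (2 * k - (k + r + i))) *
          (k.factorial * (2 * k) ^ (2 * (k + r - 1 - i - k)) * 2 ^ (2 * k - (k + r - 1 - i))) :=
          Nat.mul_le_mul b1 b2
      _ = (k.factorial)^2 * (2 * k) ^ (2 * (k + r + i - k) + 2 * (k + r - 1 - i - k)) *
            2 ^ ((2 * k - (k + r + i)) + (2 * k - (k + r - 1 - i))) := by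
          rw [pow_add, pow_add]; ring
      _ ≤ (k.factorial)^2 * (2 * k) ^ (4 * r - 2) * 2 ^ (2 * k) := by
          have e1 : 2 * (k + r + i - k) + 2 * (k + r - 1 - i - k) = 4 * r - 2 := by omega
          rw [e1]
          exact Nat.mul_le_mul le_rfl (Nat.pow_le_pow_right (by omega) (by omega))
      _ = 4 ^ k * (k.factorial) ^ 2 * (2 * k) ^ (4 * r - 2) := by
          have : (2:ℕ) ^ (2 * k) = 4 ^ k := by rw [pow_mul]; norm_num
          rw [this]; ring
  · have : vB k (k + r + i) = 0 := by
      unfold vB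
      rw [Nat.descFactorial_eq_zero_iff_lt.2 (by omega)]
      ring
    rw [this]; omega

lemma ibp_poly (A B : ℝ[X]) :
    ∫ t in (-1:ℝ)..1, A.eval t * (derivative B).eval t
      = (A.eval 1 * B.eval 1 - A.eval (-1) * B.eval (-1))
        - ∫ t in (-1:ℝ)..1, (derivative A).eval t * B.eval t := by
  have h := intervalIntegral.integral_mul_deriv_eq_deriv_mul
    (a := (-1:ℝ)) (b := 1)
    (u := fun t => A.eval t) (v := fun t => B.eval t)
    (u' := fun t => (derivative A).eval t) (v' := fun t => (derivative B).eval t)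
    (fun x _ => A.hasDerivAt x) (fun x _ => B.hasDerivAt x)
    ((A.derivative.continuous_aeval).intervalIntegrable _ _)
    ((B.derivative.continuous_aeval).intervalIntegrable _ _)
  rw [h]

lemma ibp_iter (j : ℕ) (A B : ℝ[X]) :
    ∫ t in (-1:ℝ)..1, A.eval t * (derivative^[j] B).eval t
      = (∑ i ∈ Finset.range j, (-1:ℝ)^i *
          ((derivative^[i] A).eval 1 * (derivative^[j-1-i] B).eval 1
           - (derivative^[i] A).eval (-1) * (derivative^[j-1-i] B).eval (-1)))
        + (-1:ℝ)^j * ∫ t in (-1:ℝ)..1, (derivative^[j] A).eval t * B.eval t := by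
  induction j generalizing A with
  | zero => simp
  | succ j ih =>
    rw [Function.iterate_succ_apply', ibp_poly, ih (derivative A), Finset.sum_range_succ']
    have h1 : ∀ x : ℕ, j + 1 - 1 - (x + 1) = j - (x + 1) := fun x => by omega
    have h2 : ∀ x : ℕ, j - 1 - x = j - (x + 1) := fun x => by omega
    have h3 : j + 1 - 1 - 0 = j := by omega
    simp only [Function.iterate_succ_apply, Function.iterate_zero_apply, h1, h2, h3, pow_succ,
      pow_zero, one_mul, mul_neg, mul_one, neg_mul, neg_neg, Finset.sum_neg_distrib]
    ring

lemma natDegree_UP_le (k : ℕ) : (UP k).natDegree ≤ 2 * k := by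
  unfold UP
  refine le_trans (Polynomial.natDegree_pow_le) ?_
  have h : ((X - C (1:ℝ)) * (X - C (-1))).natDegree ≤ 2 := by
    refine le_trans (Polynomial.natDegree_mul_le) ?_
    have h1 := Polynomial.natDegree_X_sub_C (1:ℝ)
    have h2 := Polynomial.natDegree_X_sub_C (-1:ℝ)
    omega
  calc k * ((X - C (1:ℝ)) * (X - C (-1))).natDegree ≤ k * 2 := Nat.mul_le_mul_left k h
    _ = 2 * k := by ring

lemma abs_eval_one_le (k a : ℕ) : |(derivative^[a] (UP k)).eval 1| ≤ (vB k a : ℝ) := by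
  have hU : UP k = ((X - C (-1:ℝ)) * (X - C 1)) ^ k := by unfold UP; rw [mul_comm]
  rw [hU]
  exact key_abs_eval 1 (-1) (by norm_num) k a

lemma abs_eval_neg_one_le (k a : ℕ) : |(derivative^[a] (UP k)).eval (-1)| ≤ (vB k a : ℝ) := by
  unfold UP
  exact key_abs_eval (-1) 1 (by norm_num) k a

lemma J_le (k r : ℕ) (hr : 1 ≤ r) (hrk : r ≤ k) :
    ∫ t in (-1:ℝ)..1, ((derivative^[k + r] (UP k)).eval t)^2
      ≤ 2 * r * (4 ^ k * (k.factorial : ℝ) ^ 2 * (2 * k) ^ (4 * r - 2)) := by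
  have h := ibp_iter (k + r) (derivative^[k + r] (UP k)) (UP k)
  have hzero : derivative^[k + r] (derivative^[k + r] (UP k)) = 0 := by
    rw [← Function.iterate_add_apply]
    apply Polynomial.iterate_derivative_eq_zero
    have := natDegree_UP_le k
    omega
  rw [hzero] at h
  simp only [Polynomial.eval_zero, zero_mul, mul_zero, intervalIntegral.integral_const,
    smul_zero, add_zero] at h
  have hgoal : ∫ t in (-1:ℝ)..1, ((derivative^[k + r] (UP k)).eval t)^2
      = ∑ i ∈ Finset.range (k + r), (-1:ℝ)^i *
          ((derivative^[i] (derivative^[k + r] (UP k))).eval 1 *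
            (derivative^[k + r - 1 - i] (UP k)).eval 1
           - (derivative^[i] (derivative^[k + r] (UP k))).eval (-1) *
            (derivative^[k + r - 1 - i] (UP k)).eval (-1)) := by
    rw [← h]
    congr 1
    funext t
    ring
  rw [hgoal]
  have hiter : ∀ i : ℕ, derivative^[i] (derivative^[k + r] (UP k))
      = derivative^[k + r + i] (UP k) := by
    intro i
    rw [← Function.iterate_add_apply]
    congr 1
    omega
  have tb : ∀ i ∈ Finset.range (k + r), (-1:ℝ)^i *
          ((derivative^[i] (derivative^[k + r] (UP k))).eval 1 *
            (derivative^[k + r - 1 - i] (UP k)).eval 1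
           - (derivative^[i] (derivative^[k + r] (UP k))).eval (-1) *
            (derivative^[k + r - 1 - i] (UP k)).eval (-1))
        ≤ 2 * ((vB k (k + r + i) : ℝ) * (vB k (k + r - 1 - i) : ℝ)) := by
    intro i _
    rw [hiter i]
    refine le_trans (le_abs_self _) ?_
    rw [abs_mul, abs_pow, abs_neg, abs_one, one_pow, one_mul]
    refine le_trans (abs_sub _ _) ?_
    have b1 := abs_eval_one_le k (k + r + i)
    have b2 := abs_eval_one_le k (k + r - 1 - i)
    have b3 := abs_eval_neg_one_le k (k + r + i)
    have b4 := abs_eval_neg_one_le k (k + r - 1 - i)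
    rw [abs_mul, abs_mul]
    have p1 : |(derivative^[k+r+i] (UP k)).eval 1| * |(derivative^[k+r-1-i] (UP k)).eval 1|
        ≤ (vB k (k + r + i) : ℝ) * (vB k (k + r - 1 - i) : ℝ) :=
      mul_le_mul b1 b2 (abs_nonneg _) (Nat.cast_nonneg _)
    have p2 : |(derivative^[k+r+i] (UP k)).eval (-1)| * |(derivative^[k+r-1-i] (UP k)).eval (-1)|
        ≤ (vB k (k + r + i) : ℝ) * (vB k (k + r - 1 - i) : ℝ) :=
      mul_le_mul b3 b4 (abs_nonneg _) (Nat.cast_nonneg _)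
    linarith
  refine le_trans (Finset.sum_le_sum tb) ?_
  rw [Finset.range_eq_Ico, ← Finset.sum_Ico_consecutive _ (Nat.zero_le r) (by omega : r ≤ k + r)]
  have part1 : ∑ i ∈ Finset.Ico 0 r, 2 * ((vB k (k + r + i) : ℝ) * (vB k (k + r - 1 - i) : ℝ))
      ≤ ∑ _i ∈ Finset.Ico 0 r, 2 * (4 ^ k * (k.factorial : ℝ) ^ 2 * (2 * k) ^ (4 * r - 2)) := by
    refine Finset.sum_le_sum fun i hi => ?_
    have hir : i < r := by simpa using (Finset.mem_Ico.1 hi).2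
    have := vB_prod_le k r i hr hrk hir
    have hc : ((vB k (k + r + i) * vB k (k + r - 1 - i) : ℕ) : ℝ)
        ≤ ((4 ^ k * (k.factorial) ^ 2 * (2 * k) ^ (4 * r - 2) : ℕ) : ℝ) := Nat.cast_le.2 this
    push_cast at hc
    nlinarith [hc]
  have part2 : ∑ i ∈ Finset.Ico r (k + r),
      2 * ((vB k (k + r + i) : ℝ) * (vB k (k + r - 1 - i) : ℝ)) ≤ 0 := by
    apply Finset.sum_nonpos
    intro i hi
    have hir : r ≤ i := (Finset.mem_Ico.1 hi).1
    have hv : vB k (k + r - 1 - i) = 0 := by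
      unfold vB
      rw [Nat.choose_eq_zero_of_lt (by omega)]
      ring
    rw [hv]
    simp
  have csum : ∑ _i ∈ Finset.Ico 0 r, 2 * (4 ^ k * (k.factorial : ℝ) ^ 2 * (2 * k) ^ (4 * r - 2))
      = 2 * r * (4 ^ k * (k.factorial : ℝ) ^ 2 * (2 * k) ^ (4 * r - 2)) := by
    rw [Finset.sum_const, Nat.card_Ico, Nat.sub_zero, nsmul_eq_mul]
    ring
  linarith


lemma UP_eval (k : ℕ) : (fun s : ℝ => (s^2 - 1)^k) = fun s => (UP k).eval s := by
  funext s
  simp only [UP, Polynomial.eval_pow, Polynomial.eval_mul, Polynomial.eval_sub,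
    Polynomial.eval_X, Polynomial.eval_C]
  ring

lemma phi_eq (k : ℕ) : phi k = fun t => (C (ck k) * derivative^[k] (UP k)).eval t := by
  funext t
  unfold phi ck
  rw [UP_eval, iteratedDeriv_polyEval]
  simp [mul_assoc]

lemma dk_eq (k r : ℕ) :
    iteratedDeriv r (phi k) = fun t => ck k * (derivative^[k + r] (UP k)).eval t := by
  rw [phi_eq, iteratedDeriv_polyEval]
  funext t
  rw [Polynomial.iterate_derivative_C_mul, ← Function.iterate_add_apply,
    show r + k = k + r by omega]
  simp

lemma dk_cont (k r : ℕ) : Continuous (iteratedDeriv r (phi k)) := by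
  rw [dk_eq]
  exact continuous_const.mul ((derivative^[k + r] (UP k)).continuous_aeval)

lemma eLpNorm_le_sqrt (g : ℝ → ℝ) (hg : Continuous g) (E : ℝ) (hE : 0 ≤ E)
    (h : ∫ t in (-1:ℝ)..1, (g t)^2 ≤ E) :
    eLpNorm g 2 restr ≤ ENNReal.ofReal (Real.sqrt E) := by
  rw [eLpNorm_eq_lintegral_rpow_enorm_toReal (by norm_num) (by norm_num)]
  have h2 : (2:ℝ≥0∞).toReal = 2 := by norm_num
  rw [h2]
  have hi : ∀ x : ℝ, ‖g x‖ₑ ^ (2:ℝ) = ENNReal.ofReal ((g x)^2) := by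
    intro x
    rw [← ofReal_norm,
      ENNReal.ofReal_rpow_of_nonneg (norm_nonneg _) (by norm_num : (0:ℝ) ≤ 2)]
    congr 1
    rw [show ((2:ℝ)) = ((2:ℕ):ℝ) by norm_num, Real.rpow_natCast]
    simp [Real.norm_eq_abs, sq_abs]
  rw [lintegral_congr hi]
  have hint : Integrable (fun x => (g x)^2) restr := by
    unfold restr
    exact (hg.pow 2).integrableOn_Icc
  rw [← ofReal_integral_eq_lintegral_ofReal hint (Filter.Eventually.of_forall fun x => sq_nonneg _)]
  have hval : ∫ x, (g x)^2 ∂restr ≤ E := by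
    have e1 : ∫ x, (g x)^2 ∂restr = ∫ x in Set.Ioc (-1:ℝ) 1, (g x)^2 := by
      unfold restr
      exact MeasureTheory.integral_Icc_eq_integral_Ioc
    have e2 : ∫ t in (-1:ℝ)..1, (g t)^2 = ∫ x in Set.Ioc (-1:ℝ) 1, (g x)^2 :=
      intervalIntegral.integral_of_le (by norm_num)
    rw [e1, ← e2]
    exact h
  calc (ENNReal.ofReal (∫ x, (g x)^2 ∂restr)) ^ (1/(2:ℝ))
      ≤ (ENNReal.ofReal E) ^ (1/(2:ℝ)) :=
        ENNReal.rpow_le_rpow (ENNReal.ofReal_le_ofReal hval) (by norm_num)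
    _ = ENNReal.ofReal (Real.sqrt E) := by
        rw [ENNReal.ofReal_rpow_of_nonneg hE (by norm_num : (0:ℝ) ≤ 1/2), Real.sqrt_eq_rpow]

lemma dk_norm (k r : ℕ) (hr : 1 ≤ r) (hrk : r ≤ k) :
    eLpNorm (iteratedDeriv r (phi k)) 2 restr
      ≤ ENNReal.ofReal (Real.sqrt ((2*k+1) * r * (2*k)^(4*r-2) : ℕ)) := by
  rw [dk_eq]
  apply eLpNorm_le_sqrt _ (continuous_const.mul ((derivative^[k + r] (UP k)).continuous_aeval))
    _ (Nat.cast_nonneg _)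
  have hre : (fun t => (ck k * (derivative^[k + r] (UP k)).eval t)^2)
      = fun t => (ck k)^2 * ((derivative^[k + r] (UP k)).eval t)^2 := by
    funext t; ring
  calc ∫ t in (-1:ℝ)..1, (ck k * (derivative^[k + r] (UP k)).eval t)^2
      = (ck k)^2 * ∫ t in (-1:ℝ)..1, ((derivative^[k + r] (UP k)).eval t)^2 := by
        rw [show (fun t => (ck k * (derivative^[k + r] (UP k)).eval t)^2)
            = fun t => (ck k)^2 * ((derivative^[k + r] (UP k)).eval t)^2 from hre]
        exact intervalIntegral.integral_const_mul _ _
    _ ≤ (ck k)^2 * (2 * r * (4 ^ k * (k.factorial : ℝ) ^ 2 * (2 * k) ^ (4 * r - 2))) := by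
        apply mul_le_mul_of_nonneg_left (J_le k r hr hrk) (sq_nonneg _)
    _ = ((2*k+1) * r * (2*k)^(4*r-2) : ℕ) := by
        have hck : ck k ^ 2 = ((k:ℝ) + 1/2) * (((2:ℝ)^k * (k.factorial : ℝ))⁻¹)^2 := by
          unfold ck
          rw [mul_pow, Real.sq_sqrt (by positivity)]
        rw [hck]
        have hfac : (k.factorial : ℝ) ≠ 0 := Nat.cast_ne_zero.2 k.factorial_ne_zero
        push_cast
        rw [show ((4:ℝ))^k = (2:ℝ)^(k*2) by rw [mul_comm k 2, pow_mul]; norm_num]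
        field_simp
        ring

lemma ennorm_le_eLpNormEssSup_count (ξ : ℕ → ℝ) (k : ℕ) :
    (‖ξ k‖₊ : ℝ≥0∞) ≤ eLpNormEssSup ξ Measure.count := by
  have hae := _root_.ae_le_essSup (μ := Measure.count) (f := fun k : ℕ => (‖ξ k‖₊ : ℝ≥0∞))
  rw [Filter.eventually_iff, mem_ae_iff] at hae
  rw [Measure.count_eq_zero_iff] at hae
  by_contra hk
  have hmem : k ∈ {y | (‖ξ y‖₊ : ℝ≥0∞) ≤ essSup (fun k : ℕ => (‖ξ k‖₊ : ℝ≥0∞)) Measure.count}ᶜ :=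
    hk
  rw [hae] at hmem
  exact hmem

lemma lp_bound (p : ℝ≥0∞) (hp : 1 ≤ p) (ξ : ℕ → ℝ) (δ : ℝ)
    (hξ : eLpNorm ξ p Measure.count ≤ ENNReal.ofReal δ) (s : Finset ℕ) :
    ∑ k ∈ s, (‖ξ k‖₊ : ℝ≥0∞)
      ≤ (s.card : ℝ≥0∞) ^ (1 - (p.toReal)⁻¹) * ENNReal.ofReal δ := by
  by_cases hptop : p = ∞
  · subst hptop
    rw [eLpNorm_exponent_top] at hξ
    have hexp : (1 : ℝ) - (ENNReal.toReal ⊤)⁻¹ = 1 := by norm_num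
    rw [hexp, ENNReal.rpow_one]
    calc ∑ k ∈ s, (‖ξ k‖₊ : ℝ≥0∞) ≤ ∑ _k ∈ s, ENNReal.ofReal δ :=
          Finset.sum_le_sum fun k _ => le_trans (ennorm_le_eLpNormEssSup_count ξ k) hξ
      _ = (s.card : ℝ≥0∞) * ENNReal.ofReal δ := by rw [Finset.sum_const, nsmul_eq_mul]
  · have hpt : 1 ≤ p.toReal := by
      rw [← ENNReal.toReal_one]
      exact ENNReal.toReal_mono hptop hp
    have hpt0 : p.toReal ≠ 0 := by linarith
    have hsum : ∑' k, (‖ξ k‖₊ : ℝ≥0∞) ^ p.toReal ≤ (ENNReal.ofReal δ) ^ p.toReal := by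
      rw [eLpNorm_eq_lintegral_rpow_enorm_toReal (zero_lt_one.trans_le hp).ne' hptop,
        MeasureTheory.lintegral_count] at hξ
      calc ∑' k, (‖ξ k‖₊ : ℝ≥0∞) ^ p.toReal
          = ((∑' k, (‖ξ k‖₊ : ℝ≥0∞) ^ p.toReal) ^ (1/p.toReal)) ^ p.toReal := by
            rw [← ENNReal.rpow_mul, one_div, inv_mul_cancel₀ hpt0, ENNReal.rpow_one]
        _ ≤ (ENNReal.ofReal δ) ^ p.toReal := ENNReal.rpow_le_rpow hξ (by linarith)
    have hfin : ∑ k ∈ s, (‖ξ k‖₊ : ℝ≥0∞) ^ p.toReal ≤ (ENNReal.ofReal δ) ^ p.toReal :=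
      le_trans (ENNReal.sum_le_tsum s) hsum
    have hH := ENNReal.inner_le_weight_mul_Lp_of_nonneg s hpt (fun _ => 1)
      (fun k => (‖ξ k‖₊ : ℝ≥0∞))
    simp only [one_mul, Finset.sum_const, nsmul_eq_mul, mul_one] at hH
    calc ∑ k ∈ s, (‖ξ k‖₊ : ℝ≥0∞)
        ≤ ((s.card : ℝ≥0∞)) ^ (1 - (p.toReal)⁻¹) *
            (∑ k ∈ s, (‖ξ k‖₊ : ℝ≥0∞) ^ p.toReal) ^ (p.toReal)⁻¹ := hH
      _ ≤ ((s.card : ℝ≥0∞)) ^ (1 - (p.toReal)⁻¹) *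
            ((ENNReal.ofReal δ) ^ p.toReal) ^ (p.toReal)⁻¹ :=
          mul_le_mul' le_rfl (ENNReal.rpow_le_rpow hfin (by positivity))
      _ = ((s.card : ℝ≥0∞)) ^ (1 - (p.toReal)⁻¹) * ENNReal.ofReal δ := by
          rw [← ENNReal.rpow_mul, mul_inv_cancel₀ hpt0, ENNReal.rpow_one]

/-- `L²` perturbation bound:
`‖D_N^{(r)}f - D_N^{(r)}f^δ‖_2 ≤ c δ N^{2r-1/p+1/2}` under `‖ξ‖_{ℓ_p} ≤ δ`. -/
theorem stmt_8 (r : ℕ) (hr : 1 ≤ r) (p : ℝ≥0∞) (hp : 1 ≤ p) :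
    ∃ c : ℝ, 0 < c ∧ ∀ (δ : ℝ), 0 < δ → δ < 1 → ∀ f fδ : ℝ → ℝ,
      eLpNorm (fun k : ℕ => coef f k - coef fδ k) p (Measure.count) ≤ ENNReal.ofReal δ →
      ∀ N : ℕ, r ≤ N →
        eLpNorm (fun t => DN (coef f) r N t - DN (coef fδ) r N t) 2 restr ≤
          ENNReal.ofReal (c * δ * (N : ℝ) ^ (2 * r - 1 / p.toReal + 1 / 2)) := by
  classical
  have hEpos : (0:ℝ) < ((3 * r * 16 ^ r : ℕ) : ℝ) := by
    have h16 : 0 < 16 ^ r := pow_pos (by norm_num) r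
    have : 0 < 3 * r * 16 ^ r := Nat.mul_pos (by omega) h16
    exact_mod_cast this
  refine ⟨2 * Real.sqrt ((3 * r * 16 ^ r : ℕ)), by positivity, ?_⟩
  intro δ hδ0 hδ1 f fδ hξ N hN
  set ξ : ℕ → ℝ := fun k => coef f k - coef fδ k with hξdef
  have hN1 : 1 ≤ N := le_trans hr hN
  have hNpos : (0:ℝ) < (N:ℝ) := by exact_mod_cast hN1
  have hfun : (fun t => DN (coef f) r N t - DN (coef fδ) r N t)
      = ∑ k ∈ Finset.Icc r N, (fun t => ξ k • iteratedDeriv r (phi k) t) := by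
    funext t
    rw [Finset.sum_apply]
    unfold DN
    rw [← Finset.sum_sub_distrib]
    refine Finset.sum_congr rfl fun k _ => ?_
    simp only [hξdef, smul_eq_mul]
    ring
  have hstep1 : eLpNorm (fun t => DN (coef f) r N t - DN (coef fδ) r N t) 2 restr
      ≤ ∑ k ∈ Finset.Icc r N, eLpNorm (fun t => ξ k • iteratedDeriv r (phi k) t) 2 restr := by
    rw [hfun]
    exact eLpNorm_sum_le (fun k _ => (show Continuous (fun t => ξ k • iteratedDeriv r (phi k) t) from (dk_cont k r).const_smul (ξ k)).aestronglyMeasurable)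
      one_le_two
  have hterm : ∀ k ∈ Finset.Icc r N,
      eLpNorm (fun t => ξ k • iteratedDeriv r (phi k) t) 2 restr
        ≤ (‖ξ k‖₊ : ℝ≥0∞) * ENNReal.ofReal (Real.sqrt (((2*N+1) * r * (2*N)^(4*r-2) : ℕ))) := by
    intro k hk
    obtain ⟨hk1, hk2⟩ := Finset.mem_Icc.1 hk
    have he : (fun t => ξ k • iteratedDeriv r (phi k) t) = ξ k • (iteratedDeriv r (phi k)) := rfl
    rw [he, eLpNorm_const_smul]
    refine mul_le_mul' le_rfl (le_trans (dk_norm k r hr hk1) (ENNReal.ofReal_le_ofReal ?_))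
    apply Real.sqrt_le_sqrt
    have hmono : (2*k+1) * r * (2*k)^(4*r-2) ≤ (2*N+1) * r * (2*N)^(4*r-2) :=
      Nat.mul_le_mul (Nat.mul_le_mul (by omega) le_rfl) (Nat.pow_le_pow_left (by omega) _)
    exact_mod_cast hmono
  have hstep2 : ∑ k ∈ Finset.Icc r N, eLpNorm (fun t => ξ k • iteratedDeriv r (phi k) t) 2 restr
      ≤ (∑ k ∈ Finset.Icc r N, (‖ξ k‖₊ : ℝ≥0∞)) *
          ENNReal.ofReal (Real.sqrt (((2*N+1) * r * (2*N)^(4*r-2) : ℕ))) := by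
    rw [Finset.sum_mul]
    exact Finset.sum_le_sum hterm
  have hlp := lp_bound p hp ξ δ hξ (Finset.Icc r N)
  have hip0 : 0 ≤ (p.toReal)⁻¹ := by positivity
  have hip1 : (p.toReal)⁻¹ ≤ 1 := by
    by_cases hptop : p = ∞
    · simp [hptop]
    · have hpt : 1 ≤ p.toReal := by
        rw [← ENNReal.toReal_one]
        exact ENNReal.toReal_mono hptop hp
      exact inv_le_one_of_one_le₀ hpt
  have he0 : 0 ≤ 1 - (p.toReal)⁻¹ := by linarith
  have he1 : 1 - (p.toReal)⁻¹ ≤ 1 := by linarith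
  have hpow : ((Finset.Icc r N).card : ℝ≥0∞) ^ (1 - (p.toReal)⁻¹)
      ≤ ENNReal.ofReal ((2*(N:ℝ)) ^ (1 - (p.toReal)⁻¹)) := by
    have hcard : ((Finset.Icc r N).card : ℝ≥0∞) ≤ ENNReal.ofReal (2*(N:ℝ)) := by
      have hc : (Finset.Icc r N).card ≤ 2*N := by rw [Nat.card_Icc]; omega
      calc ((Finset.Icc r N).card : ℝ≥0∞) ≤ ((2*N : ℕ) : ℝ≥0∞) := by exact_mod_cast hc
        _ = ENNReal.ofReal ((2*N : ℕ) : ℝ) := (ENNReal.ofReal_natCast _).symm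
        _ = ENNReal.ofReal (2*(N:ℝ)) := by push_cast; rfl
    calc ((Finset.Icc r N).card : ℝ≥0∞) ^ (1 - (p.toReal)⁻¹)
        ≤ (ENNReal.ofReal (2*(N:ℝ))) ^ (1 - (p.toReal)⁻¹) := ENNReal.rpow_le_rpow hcard he0
      _ = ENNReal.ofReal ((2*(N:ℝ)) ^ (1 - (p.toReal)⁻¹)) :=
          ENNReal.ofReal_rpow_of_nonneg (by positivity) he0
  -- final real inequality
  have hNat : (2*N+1) * r * (2*N)^(4*r-2) ≤ (3*r*16^r) * N^(4*r-1) := by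
    have h2pow : (2:ℕ)^(4*r-2) ≤ 16^r := by
      have : (16:ℕ)^r = 2^(4*r) := by
        rw [show (16:ℕ) = 2^4 from rfl, ← pow_mul]
      rw [this]
      exact Nat.pow_le_pow_right (by norm_num) (by omega)
    calc (2*N+1) * r * (2*N)^(4*r-2)
        ≤ (3*N) * r * ((2:ℕ)^(4*r-2) * N^(4*r-2)) := by
          rw [mul_pow]
          exact Nat.mul_le_mul (Nat.mul_le_mul (by omega) le_rfl) le_rfl
      _ ≤ (3*N) * r * (16^r * N^(4*r-2)) :=
          Nat.mul_le_mul le_rfl (Nat.mul_le_mul h2pow le_rfl)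
      _ = (3*r*16^r) * N^(4*r-1) := by
          have hpw : N^(4*r-1) = N * N^(4*r-2) := by
            rw [← pow_succ']
            congr 1
            omega
          rw [hpw]
          ring
  have hsq : Real.sqrt (((2*N+1) * r * (2*N)^(4*r-2) : ℕ))
      ≤ Real.sqrt ((3*r*16^r : ℕ)) * (N:ℝ) ^ ((((4*r-1:ℕ)):ℝ)/2) := by
    have h1 : Real.sqrt (((2*N+1) * r * (2*N)^(4*r-2) : ℕ))
        ≤ Real.sqrt ((((3*r*16^r) * N^(4*r-1) : ℕ))) := by
      apply Real.sqrt_le_sqrt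
      exact_mod_cast hNat
    refine h1.trans (le_of_eq ?_)
    have hc : ((((3*r*16^r) * N^(4*r-1) : ℕ)) : ℝ)
        = ((3*r*16^r : ℕ) : ℝ) * ((N:ℝ)^(4*r-1 : ℕ)) := by push_cast; ring
    rw [hc, Real.sqrt_mul (Nat.cast_nonneg _)]
    congr 1
    rw [Real.sqrt_eq_rpow, ← Real.rpow_natCast (N:ℝ) (4*r-1), ← Real.rpow_mul hNpos.le]
    congr 1
    ring
  have h2e : (2*(N:ℝ)) ^ (1 - (p.toReal)⁻¹) ≤ 2 * (N:ℝ) ^ (1 - (p.toReal)⁻¹) := by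
    rw [Real.mul_rpow (by norm_num) hNpos.le]
    have : (2:ℝ) ^ (1 - (p.toReal)⁻¹) ≤ 2 := by
      calc (2:ℝ) ^ (1 - (p.toReal)⁻¹) ≤ (2:ℝ) ^ (1:ℝ) :=
            Real.rpow_le_rpow_of_exponent_le one_le_two he1
        _ = 2 := Real.rpow_one 2
    exact mul_le_mul_of_nonneg_right this (Real.rpow_nonneg hNpos.le _)
  have hexpeq : (1 - (p.toReal)⁻¹) + (((4*r-1:ℕ)):ℝ)/2 = 2 * (r:ℝ) - 1 / p.toReal + 1 / 2 := by
    have : (((4*r-1:ℕ)):ℝ) = 4*(r:ℝ) - 1 := by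
      have h4 : 1 ≤ 4*r := by omega
      push_cast [Nat.cast_sub h4]
      ring
    rw [this, one_div]
    ring
  have hfinal : (2*(N:ℝ)) ^ (1 - (p.toReal)⁻¹) * δ * Real.sqrt (((2*N+1) * r * (2*N)^(4*r-2) : ℕ))
      ≤ 2 * Real.sqrt ((3 * r * 16 ^ r : ℕ)) * δ * (N:ℝ) ^ (2 * (r:ℝ) - 1 / p.toReal + 1 / 2) := by
    calc (2*(N:ℝ)) ^ (1 - (p.toReal)⁻¹) * δ * Real.sqrt (((2*N+1) * r * (2*N)^(4*r-2) : ℕ))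
        ≤ (2 * (N:ℝ) ^ (1 - (p.toReal)⁻¹)) * δ *
            (Real.sqrt ((3*r*16^r : ℕ)) * (N:ℝ) ^ ((((4*r-1:ℕ)):ℝ)/2)) := by
          apply mul_le_mul (mul_le_mul h2e le_rfl hδ0.le (by positivity)) hsq
            (Real.sqrt_nonneg _) (by positivity)
      _ = 2 * Real.sqrt ((3 * r * 16 ^ r : ℕ)) * δ *
            ((N:ℝ) ^ (1 - (p.toReal)⁻¹) * (N:ℝ) ^ ((((4*r-1:ℕ)):ℝ)/2)) := by ring
      _ = 2 * Real.sqrt ((3 * r * 16 ^ r : ℕ)) * δ *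
            (N:ℝ) ^ ((1 - (p.toReal)⁻¹) + (((4*r-1:ℕ)):ℝ)/2) := by
          rw [← Real.rpow_add hNpos]
      _ = 2 * Real.sqrt ((3 * r * 16 ^ r : ℕ)) * δ *
            (N:ℝ) ^ (2 * (r:ℝ) - 1 / p.toReal + 1 / 2) := by rw [hexpeq]
  refine le_trans hstep1 (le_trans hstep2 ?_)
  calc (∑ k ∈ Finset.Icc r N, (‖ξ k‖₊ : ℝ≥0∞)) *
          ENNReal.ofReal (Real.sqrt (((2*N+1) * r * (2*N)^(4*r-2) : ℕ)))
      ≤ (ENNReal.ofReal ((2*(N:ℝ)) ^ (1 - (p.toReal)⁻¹)) * ENNReal.ofReal δ) *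
          ENNReal.ofReal (Real.sqrt (((2*N+1) * r * (2*N)^(4*r-2) : ℕ))) :=
        mul_le_mul' (le_trans hlp (mul_le_mul' hpow le_rfl)) le_rfl
    _ = ENNReal.ofReal ((2*(N:ℝ)) ^ (1 - (p.toReal)⁻¹) * δ *
          Real.sqrt (((2*N+1) * r * (2*N)^(4*r-2) : ℕ))) := by
        rw [← ENNReal.ofReal_mul (by positivity), ← ENNReal.ofReal_mul (by positivity)]
    _ ≤ ENNReal.ofReal (2 * Real.sqrt ((3 * r * 16 ^ r : ℕ)) * δ *
          (N:ℝ) ^ (2 * (r:ℝ) - 1 / p.toReal + 1 / 2)) := ENNReal.ofReal_le_ofReal hfinal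
    _ = ENNReal.ofReal (2 * Real.sqrt ((3 * r * 16 ^ r : ℕ)) * δ *
          (N:ℝ) ^ (2 * (r:ℕ) - 1 / p.toReal + 1 / 2)) := by norm_num
end
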